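/- arXiv:1303.2185 — 10 statements merged into one kernel-verified Lean document; each statement's English description precedes it below -/
import Mathlib

section
/- Let g, ψ : ℝ → ℝ be continuously differentiable functions, and suppose on an interval I we have (ψ(x))² + (ψ'(x))² < (g(x))² + (g'(x))² for all x ∈ I, and g' does not change sign on I (either g'(x) ≥ 0 for all x ∈ I, or g'(x) ≤ 0 for all x ∈ I). Then g + ψ has at most one zero on I. -/
open Set

private lemma core_no_two_zeros (f f' : ℝ → ℝ) (hf : ∀ x, HasDerivAt f (f' x) x)
    (I : Set ℝ) (hI : I.OrdConnected)
    (hpos : ∀ x ∈ I, f x = 0 → 0 < f' x)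
    {a b : ℝ} (ha : a ∈ I) (hb : b ∈ I) (hab : a < b)
    (hfa : f a = 0) (hfb : f b = 0) : False := by
  have hcont : Continuous f := by
    rw [continuous_iff_continuousAt]; exact fun x => (hf x).continuousAt
  -- eventual positivity right of a
  have hfa' : 0 < f' a := hpos a ha hfa
  have h1 : Filter.Tendsto (slope f a) (nhdsWithin a {a}ᶜ) (nhds (f' a)) :=
    hasDerivAt_iff_tendsto_slope.mp (hf a)
  have h2 : ∀ᶠ x in nhdsWithin a (Ioi a), 0 < slope f a x :=
    ((h1.mono_left (nhdsWithin_mono _ (fun x hx => ne_of_gt hx))).eventually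
      (eventually_gt_nhds hfa'))
  obtain ⟨u, hu, huo⟩ := mem_nhdsGT_iff_exists_Ioo_subset.mp h2
  have hau : a < u := hu
  have hposIoo : ∀ x ∈ Ioo a u, 0 < f x := by
    intro x hx
    have h3 : 0 < f x / (x - a) := by
      have := huo hx
      simpa [slope_def_field, hfa] using this
    rcases div_pos_iff.mp h3 with ⟨h4, _⟩ | ⟨_, h5⟩
    · exact h4
    · linarith [hx.1]
  -- every zero in (a, b] is ≥ u
  have hzge : ∀ z, a < z → z ≤ b → f z = 0 → u ≤ z := by
    intro z hz1 hz2 hz0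
    by_contra h
    push_neg at h
    exact absurd hz0 (ne_of_gt (hposIoo z ⟨hz1, h⟩))
  have hub : u ≤ b := hzge b hab le_rfl hfb
  set T : Set ℝ := Icc u b ∩ {x | f x = 0} with hT
  have hTclosed : IsClosed T := isClosed_Icc.inter (isClosed_eq hcont continuous_const)
  have hTne : T.Nonempty := ⟨b, ⟨hub, le_rfl⟩, hfb⟩
  have hTbdd : BddBelow T := ⟨u, fun x hx => hx.1.1⟩
  set c := sInf T with hc
  have hcT : c ∈ T := hTclosed.csInf_mem hTne hTbdd
  have huc : u ≤ c := hcT.1.1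
  have hcb : c ≤ b := hcT.1.2
  have hfc : f c = 0 := hcT.2
  have hac : a < c := lt_of_lt_of_le hau huc
  have hcI : c ∈ I := hI.out ha hb ⟨hac.le, hcb⟩
  have hfc' : 0 < f' c := hpos c hcI hfc
  -- f is positive on (a, c)
  have hposleft : ∀ x ∈ Ioo a c, 0 < f x := by
    intro x hx
    rcases lt_or_ge x u with h | h
    · exact hposIoo x ⟨hx.1, h⟩
    · by_contra hle
      push_neg at hle
      have hne : f x ≠ 0 := by
        intro h0
        have : c ≤ x := csInf_le hTbdd ⟨⟨h, hx.2.le.trans hcb⟩, h0⟩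
        exact absurd hx.2 (not_lt.mpr this)
      have hxneg : f x < 0 := lt_of_le_of_ne hle hne
      have hpu : a < (a + u) / 2 := by linarith
      have hpu2 : (a + u) / 2 < u := by linarith
      have hp : 0 < f ((a + u) / 2) := hposIoo _ ⟨hpu, hpu2⟩
      have hple : (a + u) / 2 ≤ x := le_trans hpu2.le h
      obtain ⟨z, hz, hz0⟩ := intermediate_value_Icc' hple hcont.continuousOn
        (show (0 : ℝ) ∈ Icc (f x) (f ((a + u) / 2)) from ⟨hxneg.le, hp.le⟩)
      have hz1 : a < z := lt_of_lt_of_le hpu hz.1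
      have hz2 : z ≤ b := le_trans hz.2 (le_trans hx.2.le hcb)
      have : u ≤ z := hzge z hz1 hz2 hz0
      have : c ≤ z := csInf_le hTbdd ⟨⟨this, hz2⟩, hz0⟩
      have : z < c := lt_of_le_of_lt hz.2 hx.2
      linarith
  -- the left derivative at c is ≤ 0, contradiction
  have htl : Filter.Tendsto (slope f c) (nhdsWithin c (Iio c)) (nhds (f' c)) :=
    (hasDerivAt_iff_tendsto_slope.mp (hf c)).mono_left
      (nhdsWithin_mono _ (fun x hx => ne_of_lt hx))
  have hev : ∀ᶠ x in nhdsWithin c (Iio c), slope f c x ≤ 0 := by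
    filter_upwards [Ioo_mem_nhdsLT_of_mem (⟨hac, le_refl c⟩ : c ∈ Ioc a c)] with x hx
    have h1 := hposleft x hx
    rw [slope_def_field, hfc]
    apply div_nonpos_of_nonneg_of_nonpos <;> [linarith; linarith [hx.2]]
  have : f' c ≤ 0 := le_of_tendsto htl hev
  linarith

theorem stmt_0 (g ψ g' ψ' : ℝ → ℝ) (I : Set ℝ) (hI : I.OrdConnected)
    (hg : ∀ x, HasDerivAt g (g' x) x) (hψ : ∀ x, HasDerivAt ψ (ψ' x) x)
    (hg' : Continuous g') (hψ' : Continuous ψ')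
    (hE : ∀ x ∈ I, (ψ x) ^ 2 + (ψ' x) ^ 2 < (g x) ^ 2 + (g' x) ^ 2)
    (hsign : (∀ x ∈ I, 0 ≤ g' x) ∨ (∀ x ∈ I, g' x ≤ 0)) :
    {x ∈ I | g x + ψ x = 0}.Subsingleton := by
  have key : ∀ ⦃a⦄, a ∈ I → g a + ψ a = 0 → ∀ ⦃b⦄, b ∈ I → g b + ψ b = 0 → a < b → False := by
    intro a haI hfa b hbI hfb hab
    have hderiv' : ∀ x ∈ I, g x + ψ x = 0 → (ψ' x) ^ 2 < (g' x) ^ 2 := by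
      intro x hx h0
      have hE' := hE x hx
      have hψx : ψ x ^ 2 = g x ^ 2 := by
        have : ψ x = -g x := by linarith
        rw [this]; ring
      linarith
    rcases hsign with hs | hs
    · exact core_no_two_zeros (fun x => g x + ψ x) (fun x => g' x + ψ' x)
        (fun x => (hg x).add (hψ x)) I hI
        (fun x hx h0 => by
          have h1 := hderiv' x hx h0
          have h2 := hs x hx
          by_contra hc
          push_neg at hc
          nlinarith [mul_nonneg (show (0:ℝ) ≤ g' x - ψ' x by nlinarith)
            (show (0:ℝ) ≤ -(g' x + ψ' x) by linarith)])
        haI hbI hab hfa hfb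
    · exact core_no_two_zeros (fun x => -(g x + ψ x)) (fun x => -(g' x + ψ' x))
        (fun x => ((hg x).add (hψ x)).neg) I hI
        (fun x hx h0 => by
          have h0' : g x + ψ x = 0 := by
            have := neg_eq_zero.mp h0
            linarith
          have h1 := hderiv' x hx h0'
          have h2 := hs x hx
          by_contra hc
          push_neg at hc
          nlinarith [mul_nonneg (show (0:ℝ) ≤ ψ' x - g' x by nlinarith)
            (show (0:ℝ) ≤ g' x + ψ' x by linarith)])
        haI hbI hab (by simp [hfa]) (by simp [hfb])
  intro x hx y hy
  by_contra hne
  rcases lt_trichotomy x y with h | h | h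
  · exact key hx.1 hx.2 hy.1 hy.2 h
  · exact hne h
  · exact key hy.1 hy.2 hx.1 hx.2 h
end

section
/- Let g, ψ : ℝ → ℝ be continuously differentiable, and let I = [s,t] be a closed interval with g'(s) = 0 = g'(t) and g'(x) ≠ 0 for all x ∈ (s,t). Suppose ψ(x)² + ψ'(x)² < g(x)² + g'(x)² for all x ∈ I. Then g + ψ and g have the same number of zeros on I, and neither g nor g + ψ vanishes at the endpoints s or t. -/
open Set Filter Topology

private lemma ex_pos_right (f : ℝ → ℝ) {f' a b : ℝ} (h : HasDerivAt f f' a)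
    (hfa : f a = 0) (h' : 0 < f') (hab : a < b) : ∃ x ∈ Ioo a b, 0 < f x := by
  have hs : Tendsto (slope f a) (𝓝[≠] a) (𝓝 f') := hasDerivAt_iff_tendsto_slope.mp h
  have h1 : ∀ᶠ x in 𝓝[≠] a, 0 < slope f a x := hs (Ioi_mem_nhds h')
  have hle : (𝓝[>] a) ≤ 𝓝[≠] a := nhdsWithin_mono a fun x hx => ne_of_gt hx
  have h2 : ∀ᶠ x in 𝓝[>] a, 0 < slope f a x := hle h1
  have h3 : ∀ᶠ x in 𝓝[>] a, x ∈ Ioo a b := Ioo_mem_nhdsGT_of_mem ⟨le_refl a, hab⟩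
  obtain ⟨x, hx1, hx2⟩ := (h2.and h3).exists
  refine ⟨x, hx2, ?_⟩
  have hxa : a < x := hx2.1
  have hmul := mul_pos hx1 (sub_pos.2 hxa)
  rw [slope_def_field, div_mul_cancel₀ _ (sub_ne_zero.2 (ne_of_gt hxa))] at hmul
  linarith

private lemma ex_neg_left (f : ℝ → ℝ) {f' a b : ℝ} (h : HasDerivAt f f' b)
    (hfb : f b = 0) (h' : 0 < f') (hab : a < b) : ∃ x ∈ Ioo a b, f x < 0 := by
  have hs : Tendsto (slope f b) (𝓝[≠] b) (𝓝 f') := hasDerivAt_iff_tendsto_slope.mp h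
  have h1 : ∀ᶠ x in 𝓝[≠] b, 0 < slope f b x := hs (Ioi_mem_nhds h')
  have hle : (𝓝[<] b) ≤ 𝓝[≠] b := nhdsWithin_mono b fun x hx => ne_of_lt hx
  have h2 : ∀ᶠ x in 𝓝[<] b, 0 < slope f b x := hle h1
  have h3 : ∀ᶠ x in 𝓝[<] b, x ∈ Ioo a b := Ioo_mem_nhdsLT_of_mem ⟨hab, le_refl b⟩
  obtain ⟨x, hx1, hx2⟩ := (h2.and h3).exists
  refine ⟨x, hx2, ?_⟩
  have hxb : x < b := hx2.2
  have hmul := mul_neg_of_pos_of_neg hx1 (sub_neg.2 hxb)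
  rw [slope_def_field, div_mul_cancel₀ _ (sub_ne_zero.2 (ne_of_lt hxb))] at hmul
  linarith

private lemma no_two_zeros (f f' : ℝ → ℝ) (hf : ∀ x, HasDerivAt f (f' x) x)
    (s t : ℝ) (hz : ∀ x ∈ Ioo s t, f x = 0 → 0 < f' x)
    {a b : ℝ} (ha : a ∈ Ioo s t) (hb : b ∈ Ioo s t) (hab : a < b)
    (hfa : f a = 0) (hfb : f b = 0) : False := by
  have hcont : Continuous f := by
    rw [continuous_iff_continuousAt]; exact fun x => (hf x).continuousAt
  obtain ⟨a', ha', hfa'⟩ := ex_pos_right f (hf a) hfa (hz a ha hfa) hab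
  obtain ⟨b', hb', hfb'⟩ := ex_neg_left f (hf b) hfb (hz b hb hfb) ha'.2
  set S := Icc a' b' ∩ {x | 0 ≤ f x} with hS
  have hSclosed : IsClosed S := isClosed_Icc.inter (isClosed_le continuous_const hcont)
  have ha'S : a' ∈ S := ⟨⟨le_refl _, le_of_lt hb'.1⟩, le_of_lt hfa'⟩
  have hSbdd : BddAbove S := bddAbove_Icc.mono inter_subset_left
  have hSne : S.Nonempty := ⟨a', ha'S⟩
  have hcS : sSup S ∈ S := hSclosed.csSup_mem hSne hSbdd
  set c := sSup S with hc
  have hcb' : c ≤ b' := hcS.1.2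
  have hclt : c < b' := lt_of_le_of_ne hcb' (by
    intro h; rw [h] at hcS; exact absurd hcS.2 (not_le.2 hfb'))
  have hneg : ∀ x ∈ Ioc c b', f x < 0 := by
    intro x hx
    by_contra hle
    push_neg at hle
    have hxS : x ∈ S := ⟨⟨le_trans hcS.1.1 (le_of_lt hx.1), hx.2⟩, hle⟩
    exact absurd (le_csSup hSbdd hxS) (not_le.2 hx.1)
  have hfc_le : f c ≤ 0 := by
    have hcl : c ∈ closure (Ioc c b') := by
      rw [closure_Ioc (ne_of_lt hclt)]; exact ⟨le_refl c, le_of_lt hclt⟩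
    haveI : (𝓝[Ioc c b'] c).NeBot := mem_closure_iff_nhdsWithin_neBot.mp hcl
    have htend : Tendsto f (𝓝[Ioc c b'] c) (𝓝 (f c)) :=
      (hcont.continuousWithinAt)
    refine le_of_tendsto htend ?_
    filter_upwards [self_mem_nhdsWithin] with x hx using (hneg x hx).le
  have hfc : f c = 0 := le_antisymm hfc_le hcS.2
  have hcIoo : c ∈ Ioo s t :=
    ⟨lt_of_lt_of_le (lt_trans ha.1 ha'.1) hcS.1.1, lt_trans (lt_of_lt_of_le hclt hb'.2.le) hb.2⟩
  obtain ⟨x, hx, hfx⟩ := ex_pos_right f (hf c) hfc (hz c hcIoo hfc) hclt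
  exact absurd (hneg x ⟨hx.1, hx.2.le⟩) (not_lt.2 hfx.le)

private lemma count_zeros (f f' : ℝ → ℝ) (hf : ∀ x, HasDerivAt f (f' x) x)
    (s t : ℝ) (hst : s < t)
    (hz : ∀ x ∈ Ioo s t, f x = 0 → 0 < f' x)
    (hs : f s ≠ 0) (ht : f t ≠ 0) :
    {x ∈ Icc s t | f x = 0}.ncard = if f s * f t < 0 then 1 else 0 := by
  have hcont : Continuous f := by
    rw [continuous_iff_continuousAt]; exact fun x => (hf x).continuousAt
  have hIoo : ∀ x ∈ Icc s t, f x = 0 → x ∈ Ioo s t := by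
    rintro x ⟨h1, h2⟩ hx
    rcases eq_or_lt_of_le h1 with rfl | h1'
    · exact absurd hx hs
    rcases eq_or_lt_of_le h2 with rfl | h2'
    · exact absurd hx ht
    exact ⟨h1', h2'⟩
  by_cases hneg : f s * f t < 0
  · rw [if_pos hneg]
    have hex : ∃ c ∈ Icc s t, f c = 0 := by
      rcases mul_neg_iff.mp hneg with ⟨h1, h2⟩ | ⟨h1, h2⟩
      · obtain ⟨c, hc, hfc⟩ := intermediate_value_Icc' hst.le hcont.continuousOn
          (⟨h2.le, h1.le⟩ : (0:ℝ) ∈ Icc (f t) (f s))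
        exact ⟨c, hc, hfc⟩
      · obtain ⟨c, hc, hfc⟩ := intermediate_value_Icc hst.le hcont.continuousOn
          (⟨h1.le, h2.le⟩ : (0:ℝ) ∈ Icc (f s) (f t))
        exact ⟨c, hc, hfc⟩
    obtain ⟨c, hc, hfc⟩ := hex
    have hset : {x ∈ Icc s t | f x = 0} = {c} := by
      ext x
      simp only [mem_setOf_eq, mem_singleton_iff]
      constructor
      · rintro ⟨hx1, hx2⟩
        rcases lt_trichotomy x c with h | h | h
        · exact absurd (no_two_zeros f f' hf s t hz (hIoo x hx1 hx2) (hIoo c hc hfc) h hx2 hfc) not_false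
        · exact h
        · exact absurd (no_two_zeros f f' hf s t hz (hIoo c hc hfc) (hIoo x hx1 hx2) h hfc hx2) not_false
      · rintro rfl; exact ⟨hc, hfc⟩
    rw [hset, ncard_singleton]
  · rw [if_neg hneg]
    have hmul : 0 < f s * f t := lt_of_le_of_ne (not_lt.mp hneg) (Ne.symm (mul_ne_zero hs ht))
    have hset : {x ∈ Icc s t | f x = 0} = ∅ := by
      rw [eq_empty_iff_forall_notMem]
      rintro c ⟨hc, hfc⟩
      have hcIoo : c ∈ Ioo s t := hIoo c hc hfc
      rcases mul_pos_iff.mp hmul with ⟨h1, h2⟩ | ⟨h1, h2⟩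
      · -- f s > 0, f t > 0
        obtain ⟨x, hx, hfx⟩ := ex_neg_left f (hf c) hfc (hz c hcIoo hfc) hcIoo.1
        obtain ⟨d, hd, hfd⟩ := intermediate_value_Icc' hx.1.le hcont.continuousOn
          (⟨hfx.le, h1.le⟩ : (0:ℝ) ∈ Icc (f x) (f s))
        have hdIoo : d ∈ Ioo s t := hIoo d ⟨hd.1, le_trans hd.2 (le_of_lt (lt_trans hx.2 hcIoo.2))⟩ hfd
        exact no_two_zeros f f' hf s t hz hdIoo hcIoo (lt_of_le_of_lt hd.2 hx.2) hfd hfc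
      · -- f s < 0, f t < 0
        obtain ⟨x, hx, hfx⟩ := ex_pos_right f (hf c) hfc (hz c hcIoo hfc) hcIoo.2
        obtain ⟨d, hd, hfd⟩ := intermediate_value_Icc' hx.2.le hcont.continuousOn
          (⟨h2.le, hfx.le⟩ : (0:ℝ) ∈ Icc (f t) (f x))
        have hdIoo : d ∈ Ioo s t := hIoo d ⟨le_trans (le_of_lt (lt_trans hcIoo.1 hx.1)) hd.1, hd.2⟩ hfd
        exact no_two_zeros f f' hf s t hz hcIoo hdIoo (lt_of_lt_of_le hx.1 hd.1) hfc hfd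
    rw [hset]
    simp

private lemma count_zeros_neg (f f' : ℝ → ℝ) (hf : ∀ x, HasDerivAt f (f' x) x)
    (s t : ℝ) (hst : s < t)
    (hz : ∀ x ∈ Ioo s t, f x = 0 → f' x < 0)
    (hs : f s ≠ 0) (ht : f t ≠ 0) :
    {x ∈ Icc s t | f x = 0}.ncard = if f s * f t < 0 then 1 else 0 := by
  have h := count_zeros (fun x => -f x) (fun x => -f' x) (fun x => (hf x).neg) s t hst
    (fun x hx h0 => by
      have : f x = 0 := by simpa using h0
      simpa using (hz x hx this))
    (by simpa using hs) (by simpa using ht)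
  simp only [neg_eq_zero, neg_mul_neg] at h
  exact h

private lemma sign_iff {A B : ℝ} (h : 0 < A * B) : A < 0 ↔ B < 0 := by
  constructor <;> intro h' <;> nlinarith

theorem stmt_1 (g ψ g' ψ' : ℝ → ℝ) (s t : ℝ) (hst : s ≤ t)
    (hg : ∀ x, HasDerivAt g (g' x) x) (hψ : ∀ x, HasDerivAt ψ (ψ' x) x)
    (hg' : Continuous g') (hψ' : Continuous ψ')
    (hgs : g' s = 0) (hgt : g' t = 0)
    (hg'ne : ∀ x ∈ Ioo s t, g' x ≠ 0)
    (hE : ∀ x ∈ Icc s t, (ψ x) ^ 2 + (ψ' x) ^ 2 < (g x) ^ 2 + (g' x) ^ 2) :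
    {x ∈ Icc s t | g x + ψ x = 0}.ncard = {x ∈ Icc s t | g x = 0}.ncard ∧
      g s ≠ 0 ∧ g t ≠ 0 ∧ g s + ψ s ≠ 0 ∧ g t + ψ t ≠ 0 := by
  have hEs := hE s ⟨le_refl s, hst⟩
  have hEt := hE t ⟨hst, le_refl t⟩
  rw [hgs] at hEs
  rw [hgt] at hEt
  have hgs0 : g s ≠ 0 := by
    intro h; rw [h] at hEs; nlinarith [sq_nonneg (ψ s), sq_nonneg (ψ' s)]
  have hgt0 : g t ≠ 0 := by
    intro h; rw [h] at hEt; nlinarith [sq_nonneg (ψ t), sq_nonneg (ψ' t)]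
  have hgψs0 : g s + ψ s ≠ 0 := by
    intro h
    have : ψ s = -g s := by linarith
    rw [this] at hEs; nlinarith [sq_nonneg (ψ' s)]
  have hgψt0 : g t + ψ t ≠ 0 := by
    intro h
    have : ψ t = -g t := by linarith
    rw [this] at hEt; nlinarith [sq_nonneg (ψ' t)]
  refine ⟨?_, hgs0, hgt0, hgψs0, hgψt0⟩
  rcases eq_or_lt_of_le hst with rfl | hlt
  · have h1 : {x ∈ Icc s s | g x + ψ x = 0} = ∅ := by
      rw [eq_empty_iff_forall_notMem]
      rintro x ⟨hx, hx2⟩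
      rw [Icc_self, mem_singleton_iff] at hx
      subst hx
      exact hgψs0 hx2
    have h2 : {x ∈ Icc s s | g x = 0} = ∅ := by
      rw [eq_empty_iff_forall_notMem]
      rintro x ⟨hx, hx2⟩
      rw [Icc_self, mem_singleton_iff] at hx
      subst hx
      exact hgs0 hx2
    rw [h1, h2]
  · -- sign products at endpoints
    have hps : 0 < (g s + ψ s) * g s := by nlinarith [sq_nonneg (g s + ψ s), sq_nonneg (ψ' s)]
    have hpt : 0 < (g t + ψ t) * g t := by nlinarith [sq_nonneg (g t + ψ t), sq_nonneg (ψ' t)]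
    have h4 : 0 < ((g s + ψ s) * (g t + ψ t)) * (g s * g t) := by
      rw [show ((g s + ψ s) * (g t + ψ t)) * (g s * g t)
          = ((g s + ψ s) * g s) * ((g t + ψ t) * g t) by ring]
      exact mul_pos hps hpt
    have hiff := sign_iff h4
    -- constant sign of g' on Ioo
    have hsign : (∀ x ∈ Ioo s t, 0 < g' x) ∨ (∀ x ∈ Ioo s t, g' x < 0) := by
      by_contra hcon
      push_neg at hcon
      obtain ⟨⟨a, ha, ha'⟩, ⟨b, hb, hb'⟩⟩ := hcon
      have ha'' : g' a < 0 := lt_of_le_of_ne ha' (hg'ne a ha)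
      have hb'' : 0 < g' b := lt_of_le_of_ne hb' (Ne.symm (hg'ne b hb))
      rcases lt_trichotomy a b with h | h | h
      · obtain ⟨c, hc, hfc⟩ := intermediate_value_Icc h.le hg'.continuousOn
          (⟨ha''.le, hb''.le⟩ : (0:ℝ) ∈ Icc (g' a) (g' b))
        exact hg'ne c ⟨lt_of_lt_of_le ha.1 hc.1, lt_of_le_of_lt hc.2 hb.2⟩ hfc
      · rw [h] at ha''; linarith
      · obtain ⟨c, hc, hfc⟩ := intermediate_value_Icc' h.le hg'.continuousOn
          (⟨ha''.le, hb''.le⟩ : (0:ℝ) ∈ Icc (g' a) (g' b))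
        exact hg'ne c ⟨lt_of_lt_of_le hb.1 hc.1, lt_of_le_of_lt hc.2 ha.2⟩ hfc
    have hderiv : ∀ x, HasDerivAt (fun y => g y + ψ y) (g' x + ψ' x) x :=
      fun x => (hg x).add (hψ x)
    rcases hsign with hpos | hnegs
    · have c1 := count_zeros (fun y => g y + ψ y) (fun y => g' y + ψ' y) hderiv s t hlt
        (fun x hx h0 => by
          have hEx := hE x ⟨hx.1.le, hx.2.le⟩
          have hgx : g' x > 0 := hpos x hx
          have h0' : g x + ψ x = 0 := h0
          have hψx : ψ x = -(g x) := by linarith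
          show 0 < g' x + ψ' x
          have hsq : ψ x ^ 2 = g x ^ 2 := by rw [hψx]; ring
          have h2 : ψ' x ^ 2 < g' x ^ 2 := by linarith
          nlinarith [sq_nonneg (g' x + ψ' x)])
        hgψs0 hgψt0
      have c2 := count_zeros g g' hg s t hlt
        (fun x hx _ => hpos x hx) hgs0 hgt0
      rw [c1, c2]
      exact if_congr hiff rfl rfl
    · have c1 := count_zeros_neg (fun y => g y + ψ y) (fun y => g' y + ψ' y) hderiv s t hlt
        (fun x hx h0 => by
          have hEx := hE x ⟨hx.1.le, hx.2.le⟩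
          have hgx : g' x < 0 := hnegs x hx
          have h0' : g x + ψ x = 0 := h0
          have hψx : ψ x = -(g x) := by linarith
          show g' x + ψ' x < 0
          have hsq : ψ x ^ 2 = g x ^ 2 := by rw [hψx]; ring
          have h2 : ψ' x ^ 2 < g' x ^ 2 := by linarith
          nlinarith [sq_nonneg (g' x + ψ' x)])
        hgψs0 hgψt0
      have c2 := count_zeros_neg g g' hg s t hlt
        (fun x hx _ => hnegs x hx) hgs0 hgt0
      rw [c1, c2]
      exact if_congr hiff rfl rfl
end

section
/- Let 0 ≤ α < 1 and β ≥ 0 with αβ < 1, and let φ ∈ C¹(ℝ) satisfy φ(x) → 0 and φ'(x) → 0 as x → ∞. Then there exists N ∈ ℕ such that for every integer n ≥ N, the function f(x) = cos(x) + α cos(βx) + φ(x) has exactly one zero in the interval [nπ, (n+1)π], and this zero does not occur at an endpoint of the interval. -/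
set_option maxHeartbeats 1000000

open Set Real Filter

private lemma cos_nat_mul_pi' (n : ℕ) : Real.cos ((n : ℝ) * π) = (-1 : ℝ) ^ n := by
  induction n with
  | zero => simp
  | succ k ih =>
    push_cast
    rw [add_mul, one_mul, Real.cos_add_pi, ih]
    ring

private lemma left_pos' {g : ℝ → ℝ} {d w : ℝ} (hd : HasDerivAt g d w) (hdn : d < 0)
    (hw : g w = 0) : ∀ᶠ t in nhdsWithin w (Iio w), 0 < g t := by
  have hs : Tendsto (slope g w) (nhdsWithin w {w}ᶜ) (nhds d) :=
    hasDerivAt_iff_tendsto_slope.mp hd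
  have h1 : ∀ᶠ t in nhdsWithin w {w}ᶜ, slope g w t < 0 := hs.eventually (gt_mem_nhds hdn)
  have h2 : ∀ᶠ t in nhdsWithin w (Iio w), slope g w t < 0 :=
    h1.filter_mono (nhdsWithin_mono w fun t ht => ne_of_lt ht)
  filter_upwards [h2, eventually_mem_nhdsWithin] with t hst (htw : t ∈ Iio w)
  have htw' : t - w < 0 := sub_neg.2 htw
  have : g t = slope g w t * (t - w) := by
    rw [slope_def_field, hw, sub_zero, div_mul_cancel₀]
    exact ne_of_lt htw'
  rw [this]
  exact mul_pos_of_neg_of_neg hst htw'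

private lemma deriv_nonneg_right' {g : ℝ → ℝ} {d w : ℝ} (hd : HasDerivAt g d w) (hw : g w = 0)
    (h : ∀ᶠ t in nhdsWithin w (Ioi w), 0 < g t) : 0 ≤ d := by
  have hs : Tendsto (slope g w) (nhdsWithin w (Ioi w)) (nhds d) :=
    (hasDerivAt_iff_tendsto_slope.mp hd).mono_left (nhdsWithin_mono w fun t ht => ne_of_gt ht)
  refine ge_of_tendsto hs ?_
  filter_upwards [h, eventually_mem_nhdsWithin] with t hgt (htw : t ∈ Ioi w)
  rw [slope_def_field, hw, sub_zero]
  exact (div_pos hgt (sub_pos.2 htw)).le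

private lemma key_ineq {K ε α β c u S0 : ℝ} (hα0 : 0 ≤ α) (hβ : 0 ≤ β)
    (hαK : α ≤ K) (hαβK : α * β ≤ K) (hK0 : 0 ≤ K)     (hε : 0 < ε) (hε1 : 8 * ε = 1 - K)
    (hc0 : 0 ≤ c) (hu0 : 0 ≤ u) (hc1 : c ≤ 1) (hu1 : u ≤ 1)
    (hcu : c ^ 2 + u ^ 2 = 1) (hS0nn : 0 ≤ S0)
    (hS0sq : 1 - (α * c + ε) ^ 2 ≤ S0 ^ 2) : α * β * u + ε < S0 := by
  have hQ0 : 0 ≤ α * β * u + ε := by positivity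
  have h1 : α * c ≤ K * c := mul_le_mul_of_nonneg_right hαK hc0
  have h2 : α * β * u ≤ K * u := mul_le_mul_of_nonneg_right hαβK hu0
  have h3 : (α * c + ε) ^ 2 ≤ (K * c + ε) ^ 2 := by
    have h0 : (0:ℝ) ≤ α * c + ε := by positivity
    exact pow_le_pow_left₀ h0 (add_le_add_left h1 ε) 2
  have h4 : (α * β * u + ε) ^ 2 ≤ (K * u + ε) ^ 2 :=
    pow_le_pow_left₀ hQ0 (add_le_add_left h2 ε) 2
  have h5 : (K * c + ε) ^ 2 + (K * u + ε) ^ 2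
      = K ^ 2 + 2 * K * ε * (c + u) + 2 * ε ^ 2 := by
    linear_combination (K ^ 2) * hcu
  have h7 : K ^ 2 + 2 * K * ε * (c + u) + 2 * ε ^ 2 < 1 := by
    have hKε : 0 ≤ K * ε := mul_nonneg hK0 hε.le
    have h8 : 0 ≤ K * ε * (2 - c - u) := by
      apply mul_nonneg hKε; linarith
    nlinarith [sq_nonneg (1 - K), mul_nonneg hK0 hK0]
  have hsq : (α * β * u + ε) ^ 2 < S0 ^ 2 := by linarith
  exact lt_of_pow_lt_pow_left₀ 2 hS0nn hsq

theorem stmt_2 (α β : ℝ) (hα0 : 0 ≤ α) (hα1 : α < 1) (hβ : 0 ≤ β) (hαβ : α * β < 1)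
    (φ φ' : ℝ → ℝ) (hφ : ∀ x, HasDerivAt φ (φ' x) x) (hφ'c : Continuous φ')
    (hφ0 : Tendsto φ atTop (nhds 0)) (hφ'0 : Tendsto φ' atTop (nhds 0)) :
    ∃ N : ℕ, ∀ n : ℕ, N ≤ n →
      ∃ x ∈ Ioo ((n : ℝ) * π) ((n + 1 : ℝ) * π),
        (Real.cos x + α * Real.cos (β * x) + φ x = 0) ∧
        ∀ y ∈ Icc ((n : ℝ) * π) ((n + 1 : ℝ) * π),
          Real.cos y + α * Real.cos (β * y) + φ y = 0 → y = x := by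
  set K := max α (α * β) with hKdef
  have hαK : α ≤ K := le_max_left _ _
  have hαβK : α * β ≤ K := le_max_right _ _
  have hK0 : 0 ≤ K := le_trans hα0 hαK
  have hK1 : K < 1 := max_lt hα1 hαβ
  set ε := (1 - K) / 8 with hεdef
  have hε : 0 < ε := by have : 0 < 1 - K := by linarith
                        positivity
  have hε1 : 8 * ε = 1 - K := by rw [hεdef]; ring
  -- find M such that φ and φ' are small beyond M
  have hev : ∀ᶠ x in atTop, |φ x| ≤ ε ∧ |φ' x| ≤ ε := by
    have h1 : ∀ᶠ x in atTop, φ x ∈ Metric.ball (0:ℝ) ε := hφ0 (Metric.ball_mem_nhds 0 hε)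
    have h2 : ∀ᶠ x in atTop, φ' x ∈ Metric.ball (0:ℝ) ε := hφ'0 (Metric.ball_mem_nhds 0 hε)
    filter_upwards [h1, h2] with x hx1 hx2
    rw [Metric.mem_ball, Real.dist_eq, sub_zero] at hx1 hx2
    exact ⟨hx1.le, hx2.le⟩
  obtain ⟨M, hM⟩ := eventually_atTop.mp hev
  obtain ⟨N, hN⟩ := exists_nat_ge M
  have hπ : 0 < π := Real.pi_pos
  have hπ1 : 1 ≤ π := by linarith [Real.pi_gt_three]
  refine ⟨N, fun n hn => ?_⟩
  set a := (n : ℝ) * π with hadef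
  set b := ((n : ℝ) + 1) * π with hbdef
  have hab : a < b := by
    have h : b = a + π := by rw [hadef, hbdef]; ring
    rw [h]; linarith
  have hnN : (N : ℝ) ≤ (n : ℝ) := Nat.cast_le.mpr hn
  have hsmall : ∀ x, a ≤ x → |φ x| ≤ ε ∧ |φ' x| ≤ ε := by
    intro x hx
    refine hM x ?_
    have h1 : (N : ℝ) ≤ a := by
      calc (N : ℝ) = (N : ℝ) * 1 := by ring
        _ ≤ (n : ℝ) * π := by
            apply mul_le_mul hnN hπ1 zero_le_one (Nat.cast_nonneg n)
    linarith [hN]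
  set f : ℝ → ℝ := fun x => Real.cos x + α * Real.cos (β * x) + φ x with hfdef
  set f' : ℝ → ℝ := fun x => -Real.sin x + α * (-Real.sin (β * x) * β) + φ' x with hf'def
  have hf : ∀ x, HasDerivAt f (f' x) x := by
    intro x
    have hβx : HasDerivAt (fun y : ℝ => β * y) β x := by
      simpa using (hasDerivAt_id x).const_mul β
    have h2 : HasDerivAt (fun y : ℝ => Real.cos (β * y)) (-Real.sin (β * x) * β) x :=
      (Real.hasDerivAt_cos (β * x)).comp x hβx
    exact ((Real.hasDerivAt_cos x).add (h2.const_mul α)).add (hφ x)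
  have hfc : Continuous f := by
    have : Differentiable ℝ f := fun x => (hf x).differentiableAt
    exact this.continuous
  set s : ℝ := (-1 : ℝ) ^ n with hsdef
  have hs2 : s * s = 1 := by
    rw [hsdef, ← pow_add, ← two_mul, pow_mul]
    norm_num
  have hsabs : |s| = 1 := by
    rw [hsdef, abs_pow, abs_neg, abs_one, one_pow]
  set g : ℝ → ℝ := fun x => s * f x with hgdef
  have hg : ∀ x, HasDerivAt g (s * f' x) x := fun x => (hf x).const_mul s
  have hgc : Continuous g := continuous_const.mul hfc
  have hcosa : Real.cos a = s := cos_nat_mul_pi' n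
  have hcosb : Real.cos b = -s := by
    rw [hbdef, add_mul, one_mul, Real.cos_add_pi, ← hadef, hcosa]
  -- endpoint bounds
  have habs : ∀ x, a ≤ x → |α * Real.cos (β * x) + φ x| ≤ K + ε := by
    intro x hx
    calc |α * Real.cos (β * x) + φ x| ≤ |α * Real.cos (β * x)| + |φ x| := abs_add_le _ _
      _ ≤ α * 1 + ε := by
          refine add_le_add ?_ (hsmall x hx).1
          rw [abs_mul, abs_of_nonneg hα0]
          exact mul_le_mul_of_nonneg_left (abs_cos_le_one _) hα0
      _ ≤ K + ε := by linarith
  have hga : 0 < g a := by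
    have h1 := habs a le_rfl
    have h2 : g a = 1 + s * (α * Real.cos (β * a) + φ a) := by
      rw [hgdef]
      simp only [hfdef]
      rw [hcosa]
      linear_combination hs2
    rw [h2]
    have h3 : |s * (α * Real.cos (β * a) + φ a)| ≤ K + ε := by
      rw [abs_mul, hsabs, one_mul]; exact h1
    have := abs_le.mp h3
    linarith
  have hgb : g b < 0 := by
    have h1 := habs b hab.le
    have h2 : g b = -1 + s * (α * Real.cos (β * b) + φ b) := by
      rw [hgdef]
      simp only [hfdef]
      rw [hcosb]
      linear_combination -hs2
    rw [h2]
    have h3 : |s * (α * Real.cos (β * b) + φ b)| ≤ K + ε := by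
      rw [abs_mul, hsabs, one_mul]; exact h1
    have := abs_le.mp h3
    linarith
  -- derivative is negative at every zero of g in [a,b]
  have key : ∀ z ∈ Icc a b, g z = 0 → s * f' z < 0 := by
    intro z hz hgz
    have hsne : s ≠ 0 := by
      intro h; rw [h] at hs2; norm_num at hs2
    have hfz : f z = 0 := by
      rcases mul_eq_zero.mp hgz with h | h
      · exact absurd h hsne
      · exact h
    have hφz := (hsmall z hz.1).1
    have hφ'z := (hsmall z hz.1).2
    -- sin z = s * sin (z - a)
    have hzsub : 0 ≤ z - a ∧ z - a ≤ π := by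
      constructor
      · linarith [hz.1]
      · have h2 := hz.2
        rw [hbdef] at h2
        rw [hadef]
        have hexp : ((n:ℝ) + 1) * π = (n:ℝ) * π + π := by ring
        linarith
    have hsin1 : Real.sin z = s * Real.sin (z - a) := by
      have hzz : z = (z - a) + (n : ℝ) * π := by rw [hadef]; ring
      conv_lhs => rw [hzz]
      rw [Real.sin_add, Real.sin_nat_mul_pi, cos_nat_mul_pi']
      rw [hsdef]
      ring
    set S0 := Real.sin (z - a) with hS0def
    have hS0nn : 0 ≤ S0 := Real.sin_nonneg_of_nonneg_of_le_pi hzsub.1 hzsub.2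
    have hcz : Real.cos z = -(α * Real.cos (β * z) + φ z) := by
      have : Real.cos z + α * Real.cos (β * z) + φ z = 0 := hfz
      linarith
    set c := |Real.cos (β * z)| with hcdef
    set u := |Real.sin (β * z)| with hudef
    have hc0 : 0 ≤ c := abs_nonneg _
    have hu0 : 0 ≤ u := abs_nonneg _
    have hc1 : c ≤ 1 := abs_cos_le_one _
    have hu1 : u ≤ 1 := abs_sin_le_one _
    have hcu : c ^ 2 + u ^ 2 = 1 := by
      rw [hcdef, hudef, sq_abs, sq_abs]
      have := Real.sin_sq_add_cos_sq (β * z)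
      linarith
    -- |cos z| ≤ α * c + ε
    have hczb : |Real.cos z| ≤ α * c + ε := by
      rw [hcz, abs_neg]
      calc |α * Real.cos (β * z) + φ z| ≤ |α * Real.cos (β * z)| + |φ z| := abs_add_le _ _
        _ ≤ α * c + ε := by
            refine add_le_add ?_ hφz
            rw [abs_mul, abs_of_nonneg hα0]
    have hcossq : Real.cos z ^ 2 ≤ (α * c + ε) ^ 2 := by
      rw [← sq_abs]
      exact pow_le_pow_left₀ (abs_nonneg _) hczb 2
    have hS0sq : 1 - (α * c + ε) ^ 2 ≤ S0 ^ 2 := by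
      have hpyth := Real.sin_sq_add_cos_sq z
      have : Real.sin z ^ 2 = S0 ^ 2 := by
        rw [hsin1, mul_pow]
        have : s ^ 2 = 1 := by linear_combination hs2
        rw [this, one_mul]
      linarith
    -- the crucial inequality : α*β*u + ε < S0
    have hkey : α * β * u + ε < S0 :=
      key_ineq hα0 hβ hαK hαβK hK0 hε hε1 hc0 hu0 hc1 hu1 hcu hS0nn hS0sq
    -- conclude
    have hR : |s * (α * (-Real.sin (β * z) * β)) + s * φ' z| ≤ α * β * u + ε := by
      calc |s * (α * (-Real.sin (β * z) * β)) + s * φ' z|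
          ≤ |s * (α * (-Real.sin (β * z) * β))| + |s * φ' z| := abs_add_le _ _
        _ ≤ α * β * u + ε := by
            refine add_le_add ?_ ?_
            · rw [abs_mul, hsabs, one_mul, abs_mul, abs_mul, abs_neg, abs_of_nonneg hα0,
                abs_of_nonneg hβ]
              rw [← hudef]
              exact le_of_eq (by ring)
            · rw [abs_mul, hsabs, one_mul]; exact hφ'z
    have hsf' : s * f' z = -S0 + (s * (α * (-Real.sin (β * z) * β)) + s * φ' z) := by
      rw [hf'def]
      simp only
      rw [hsin1]
      linear_combination (-S0) * hs2
    rw [hsf']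
    have := (abs_le.mp hR).2
    linarith
  -- existence of a zero
  obtain ⟨x, hxIoo, hgx⟩ := intermediate_value_Ioo' hab.le hgc.continuousOn ⟨hgb, hga⟩
  have hsne : s ≠ 0 := by
    intro h; rw [h] at hs2; norm_num at hs2
  have hfx : f x = 0 := by
    rcases mul_eq_zero.mp hgx with h | h
    · exact absurd h hsne
    · exact h
  -- uniqueness
  have uniq : ∀ x1 ∈ Icc a b, ∀ x2 ∈ Icc a b, g x1 = 0 → g x2 = 0 → ¬x1 < x2 := by
    intro x1 h1 x2 h2 hg1 hg2 hlt
    have hd2 : s * f' x2 < 0 := key x2 h2 hg2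
    have hA : ∀ᶠ t in nhdsWithin x2 (Iio x2), 0 < g t := left_pos' (hg x2) hd2 hg2
    have hB : Ioo x1 x2 ∈ nhdsWithin x2 (Iio x2) := Ioo_mem_nhdsLT_of_mem ⟨hlt, le_refl x2⟩
    obtain ⟨y', hy'pos, hy'mem⟩ := (hA.and (eventually_of_mem hB fun t ht => ht)).exists
    set S := Icc x1 y' ∩ g ⁻¹' {0} with hSdef
    have hScpt : IsCompact S := isCompact_Icc.inter_right (isClosed_singleton.preimage hgc)
    have hx1S : x1 ∈ S := ⟨⟨le_refl x1, hy'mem.1.le⟩, hg1⟩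
    set w := sSup S with hwdef
    have hwS : w ∈ S := hScpt.sSup_mem ⟨x1, hx1S⟩
    have hgw : g w = 0 := hwS.2
    have hwy' : w < y' := lt_of_le_of_ne hwS.1.2 (by
      intro h
      rw [h] at hgw
      linarith)
    have hpos : ∀ t, w < t → t ≤ y' → 0 < g t := by
      intro t hwt hty'
      rcases lt_trichotomy (g t) 0 with h | h | h
      · obtain ⟨z, hzmem, hgz⟩ := intermediate_value_Ioo hty' hgc.continuousOn
          (⟨h, hy'pos⟩ : (0:ℝ) ∈ Ioo (g t) (g y'))
        have hzS : z ∈ S := ⟨⟨le_trans hwS.1.1 (le_of_lt (lt_trans hwt hzmem.1)),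
          hzmem.2.le⟩, hgz⟩
        have : z ≤ w := le_csSup hScpt.bddAbove hzS
        linarith [hzmem.1]
      · have htS : t ∈ S := ⟨⟨le_trans hwS.1.1 hwt.le, hty'⟩, h⟩
        have : t ≤ w := le_csSup hScpt.bddAbove htS
        linarith
      · exact h
    have hwIcc : w ∈ Icc a b := ⟨le_trans h1.1 hwS.1.1,
      le_trans (le_trans hwS.1.2 hy'mem.2.le) h2.2⟩
    have hdw : s * f' w < 0 := key w hwIcc hgw
    have : 0 ≤ s * f' w := by
      refine deriv_nonneg_right' (hg w) hgw ?_
      filter_upwards [Ioc_mem_nhdsGT_of_mem (⟨le_refl w, hwy'⟩ : w ∈ Ico w y')] with t ht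
      exact hpos t ht.1 ht.2
    linarith
  refine ⟨x, hxIoo, hfx, ?_⟩
  intro y hy hfy
  have hgy : g y = 0 := by
    have hfy' : f y = 0 := hfy
    show s * f y = 0
    rw [hfy', mul_zero]
  have hxIcc : x ∈ Icc a b := ⟨hxIoo.1.le, hxIoo.2.le⟩
  rcases lt_trichotomy y x with h | h | h
  · exact absurd h (uniq y hy x hxIcc hgy hgx)
  · exact h
  · exact absurd h (uniq x hxIcc y hy hgx hgy)
end

section
/- Suppose θ : [a,b] → ℝ is differentiable and satisfies θ'(x) = k cos(2θ(x)) on (a,b) for some constant k > 0, and set α = tanh(k(b−a)). Then sin(θ(b) − θ(a)) = α · cos(θ(b) + θ(a)). -/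
open Set Real

theorem stmt_3 (k a b : ℝ) (hk : 0 < k) (hab : a ≤ b) (θ : ℝ → ℝ)
    (hθ : ∀ x ∈ Icc a b, HasDerivAt θ (k * Real.cos (2 * θ x)) x) :
    Real.sin (θ b - θ a) = Real.tanh (k * (b - a)) * Real.cos (θ b + θ a) := by
  set G : ℝ → ℝ := fun x =>
    Real.sin (θ x - θ a) * Real.cosh (k * (x - a)) -
      Real.cos (θ x + θ a) * Real.sinh (k * (x - a)) with hGdef
  have hG : ∀ x ∈ Icc a b, HasDerivAt G (-(k * Real.sin (2 * θ x)) * G x) x := by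
    intro x hx
    have h1 : HasDerivAt (fun y => θ y - θ a) (k * Real.cos (2 * θ x)) x :=
      (hθ x hx).sub_const (θ a)
    have h2 : HasDerivAt (fun y => θ y + θ a) (k * Real.cos (2 * θ x)) x :=
      (hθ x hx).add_const (θ a)
    have h3 : HasDerivAt (fun y => k * (y - a)) k x := by
      simpa using ((hasDerivAt_id x).sub_const a).const_mul k
    have hd : HasDerivAt G
        ((Real.cos (θ x - θ a) * (k * Real.cos (2 * θ x))) * Real.cosh (k * (x - a))
          + Real.sin (θ x - θ a) * (Real.sinh (k * (x - a)) * k)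
          - ((-Real.sin (θ x + θ a) * (k * Real.cos (2 * θ x))) * Real.sinh (k * (x - a))
            + Real.cos (θ x + θ a) * (Real.cosh (k * (x - a)) * k))) x :=
      (h1.sin.mul h3.cosh).sub (h2.cos.mul h3.sinh)
    convert hd using 1
    have h2θ : (2 : ℝ) * θ x = (θ x - θ a) + (θ x + θ a) := by ring
    rw [h2θ, Real.cos_add, Real.sin_add]
    have p1 := Real.sin_sq_add_cos_sq (θ x - θ a)
    have p2 := Real.sin_sq_add_cos_sq (θ x + θ a)
    simp only [hGdef]
    linear_combination (-(k * Real.cosh (k * (x - a))) * Real.cos (θ x + θ a)) * p1 +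
      (k * Real.sinh (k * (x - a)) * Real.sin (θ x - θ a)) * p2
  have hcont : ContinuousOn G (Icc a b) := fun x hx =>
    ((hG x hx).continuousAt).continuousWithinAt
  have hGb : G b = 0 := by
    have := norm_le_gronwallBound_of_norm_deriv_right_le (f := G)
      (f' := fun x => -(k * Real.sin (2 * θ x)) * G x) (δ := 0) (K := k) (ε := 0)
      hcont
      (fun x hx => (hG x (Ico_subset_Icc_self hx)).hasDerivWithinAt)
      (by simp [hGdef])
      (fun x hx => by
        rw [norm_mul]
        have : ‖-(k * Real.sin (2 * θ x))‖ ≤ k := by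
          rw [norm_neg, norm_mul, Real.norm_eq_abs, Real.norm_eq_abs,
            abs_of_pos hk]
          nlinarith [abs_sin_le_one (2 * θ x), abs_nonneg (Real.sin (2 * θ x))]
        calc ‖-(k * Real.sin (2 * θ x))‖ * ‖G x‖ ≤ k * ‖G x‖ :=
              mul_le_mul_of_nonneg_right this (norm_nonneg _)
          _ ≤ k * ‖G x‖ + 0 := by simp)
      b (right_mem_Icc.2 hab)
    rw [gronwallBound_ε0_δ0] at this
    have := le_antisymm this (norm_nonneg _)
    simpa using this
  have hGb' : Real.sin (θ b - θ a) * Real.cosh (k * (b - a)) =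
      Real.cos (θ b + θ a) * Real.sinh (k * (b - a)) := by
    have : G b = _ := rfl
    simpa [hGdef, sub_eq_zero] using hGb
  rw [Real.tanh_eq_sinh_div_cosh]
  field_simp [(Real.cosh_pos (k * (b - a))).ne']
  linarith [hGb']
end

section
/- Let β > 1 and 1/β < α < 1. Define ξ = arcsin(√(α²β²−1)/√(β²−1)) and η = arcsin(√(1−α²)/(α√(β²−1))), and ν(α,β) = (2/π)(βξ + η). Then for fixed β > 1, as α varies continuously and increasingly from 1/β to 1, ν(α,β) varies continuously and strictly monotonically from 1 to β; in particular 1 < ν(α,β) < β for α ∈ (1/β, 1). -/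
open Set Real Filter Topology

set_option maxHeartbeats 1000000 in
theorem stmt_5 (β : ℝ) (hβ : 1 < β)
    (ν : ℝ → ℝ)
    (hν : ∀ α, ν α = (2 / π) * (β * Real.arcsin (Real.sqrt (α ^ 2 * β ^ 2 - 1) / Real.sqrt (β ^ 2 - 1))
      + Real.arcsin (Real.sqrt (1 - α ^ 2) / (α * Real.sqrt (β ^ 2 - 1))))) :
    ContinuousOn ν (Ioo (1 / β) 1) ∧
    StrictMonoOn ν (Ioo (1 / β) 1) ∧
    Tendsto ν (𝓝[>] (1 / β)) (𝓝 1) ∧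
    Tendsto ν (𝓝[<] 1) (𝓝 β) ∧
    ∀ α ∈ Ioo (1 / β) 1, 1 < ν α ∧ ν α < β := by
  have hνf : ν = fun α => (2 / π) * (β * Real.arcsin (Real.sqrt (α ^ 2 * β ^ 2 - 1) / Real.sqrt (β ^ 2 - 1))
      + Real.arcsin (Real.sqrt (1 - α ^ 2) / (α * Real.sqrt (β ^ 2 - 1)))) := funext hν
  subst hνf
  have hβ0 : (0:ℝ) < β := lt_trans one_pos hβ
  have hb2 : (0:ℝ) < β ^ 2 - 1 := by nlinarith
  have hs3 : 0 < Real.sqrt (β ^ 2 - 1) := Real.sqrt_pos.2 hb2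
  have hs3sq : Real.sqrt (β ^ 2 - 1) ^ 2 = β ^ 2 - 1 := Real.sq_sqrt hb2.le
  have hπ : (0:ℝ) < π := Real.pi_pos
  have hab : (1:ℝ) / β < 1 := by rw [div_lt_one hβ0]; exact hβ
  have hainv : (0:ℝ) < 1 / β := by positivity
  -- continuity on the closed interval
  have hcont : ContinuousOn (fun α => (2 / π) * (β * Real.arcsin (Real.sqrt (α ^ 2 * β ^ 2 - 1) / Real.sqrt (β ^ 2 - 1))
      + Real.arcsin (Real.sqrt (1 - α ^ 2) / (α * Real.sqrt (β ^ 2 - 1))))) (Icc (1/β) 1) := by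
    apply ContinuousOn.mul continuousOn_const
    apply ContinuousOn.add
    · exact continuousOn_const.mul (Real.continuous_arcsin.comp_continuousOn
        (((Real.continuous_sqrt.comp (by continuity)).continuousOn).div_const _))
    · apply Real.continuous_arcsin.comp_continuousOn
      apply ContinuousOn.div ((Real.continuous_sqrt.comp (by continuity)).continuousOn)
        (continuousOn_id.mul continuousOn_const)
      intro x hx
      have hx0 : 0 < x := lt_of_lt_of_le hainv hx.1
      exact (mul_pos hx0 hs3).ne'
  -- endpoint values
  have hv0 : (2 / π) * (β * Real.arcsin (Real.sqrt ((1/β) ^ 2 * β ^ 2 - 1) / Real.sqrt (β ^ 2 - 1))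
      + Real.arcsin (Real.sqrt (1 - (1/β) ^ 2) / ((1/β) * Real.sqrt (β ^ 2 - 1)))) = 1 := by
    have h1 : (1/β) ^ 2 * β ^ 2 - 1 = 0 := by field_simp; ring
    have h2 : 1 - (1/β) ^ 2 = ((1/β) * Real.sqrt (β ^ 2 - 1)) ^ 2 := by
      rw [mul_pow, hs3sq]; field_simp
    rw [h1, Real.sqrt_zero, zero_div, Real.arcsin_zero, h2,
      Real.sqrt_sq (by positivity), div_self (by positivity), Real.arcsin_one]
    field_simp; ring
  have hv1 : (2 / π) * (β * Real.arcsin (Real.sqrt ((1:ℝ) ^ 2 * β ^ 2 - 1) / Real.sqrt (β ^ 2 - 1))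
      + Real.arcsin (Real.sqrt (1 - (1:ℝ) ^ 2) / ((1:ℝ) * Real.sqrt (β ^ 2 - 1)))) = β := by
    have h1 : (1:ℝ) ^ 2 * β ^ 2 - 1 = β ^ 2 - 1 := by ring
    have h2 : (1:ℝ) - (1:ℝ) ^ 2 = 0 := by ring
    rw [h1, div_self hs3.ne', Real.arcsin_one, h2, Real.sqrt_zero, zero_div,
      Real.arcsin_zero, add_zero]
    field_simp
  -- derivative is positive on the open interval
  have hderiv : ∀ x ∈ interior (Icc (1/β) 1),
      0 < deriv (fun α => (2 / π) * (β * Real.arcsin (Real.sqrt (α ^ 2 * β ^ 2 - 1) / Real.sqrt (β ^ 2 - 1))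
        + Real.arcsin (Real.sqrt (1 - α ^ 2) / (α * Real.sqrt (β ^ 2 - 1))))) x := by
    rw [interior_Icc]
    intro x hx
    obtain ⟨hx1, hx2⟩ := hx
    have hx0 : 0 < x := lt_trans hainv hx1
    have hxb : 1 < x * β := by
      calc (1:ℝ) = (1/β) * β := by field_simp
      _ < x * β := by exact mul_lt_mul_of_pos_right hx1 hβ0
    have h1pos : 0 < x ^ 2 * β ^ 2 - 1 := by nlinarith
    have h2pos : 0 < 1 - x ^ 2 := by nlinarith
    set s1 := Real.sqrt (x ^ 2 * β ^ 2 - 1) with hs1def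
    set s2 := Real.sqrt (1 - x ^ 2) with hs2def
    set s3 := Real.sqrt (β ^ 2 - 1) with hs3def
    have hs1 : 0 < s1 := Real.sqrt_pos.2 h1pos
    have hs2 : 0 < s2 := Real.sqrt_pos.2 h2pos
    have hs1sq : s1 ^ 2 = x ^ 2 * β ^ 2 - 1 := Real.sq_sqrt h1pos.le
    have hs2sq : s2 ^ 2 = 1 - x ^ 2 := Real.sq_sqrt h2pos.le
    -- f and its derivative
    have hf1 : HasDerivAt (fun a : ℝ => a ^ 2 * β ^ 2 - 1) (2 * x * β ^ 2) x := by
      have := ((hasDerivAt_pow 2 x).mul_const (β ^ 2)).sub_const 1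
      simpa [mul_comm, mul_assoc, mul_left_comm] using this
    have hf2 : HasDerivAt (fun a : ℝ => Real.sqrt (a ^ 2 * β ^ 2 - 1) / s3)
        ((2 * x * β ^ 2 / (2 * s1)) / s3) x := (hf1.sqrt h1pos.ne').div_const s3
    have hfval : Real.sqrt (x ^ 2 * β ^ 2 - 1) / s3 = s1 / s3 := rfl
    have hflt : s1 / s3 < 1 := by
      rw [div_lt_one hs3]
      have : s1 < s3 := by
        apply Real.sqrt_lt_sqrt h1pos.le
        nlinarith
      exact this
    have hfge : 0 ≤ s1 / s3 := by positivity
    have harc1 : HasDerivAt (fun a : ℝ => Real.arcsin (Real.sqrt (a ^ 2 * β ^ 2 - 1) / s3))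
        ((1 / Real.sqrt (1 - (s1 / s3) ^ 2)) * ((2 * x * β ^ 2 / (2 * s1)) / s3)) x := by
      have := (Real.hasDerivAt_arcsin (by linarith : s1 / s3 ≠ -1) hflt.ne).comp x hf2
      simpa [Function.comp_def] using this
    have hsq1 : Real.sqrt (1 - (s1 / s3) ^ 2) = β * s2 / s3 := by
      have h : 1 - (s1 / s3) ^ 2 = (β * s2 / s3) ^ 2 := by
        rw [div_pow, div_pow, mul_pow, hs1sq, hs2sq, hs3sq]
        field_simp
        ring
      rw [h, Real.sqrt_sq (by positivity)]
    -- g and its derivative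
    have hg1 : HasDerivAt (fun a : ℝ => (1:ℝ) - a ^ 2) (-(2 * x)) x := by
      have := (hasDerivAt_pow 2 x).const_sub 1
      simpa using this
    have hg2 : HasDerivAt (fun a : ℝ => Real.sqrt (1 - a ^ 2)) (-(2 * x) / (2 * s2)) x :=
      hg1.sqrt h2pos.ne'
    have hg3 : HasDerivAt (fun a : ℝ => a * s3) s3 x := by
      simpa using (hasDerivAt_id x).mul_const s3
    have hg4 : HasDerivAt (fun a : ℝ => Real.sqrt (1 - a ^ 2) / (a * s3))
        (((-(2 * x) / (2 * s2)) * (x * s3) - s2 * s3) / (x * s3) ^ 2) x :=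
      hg2.div hg3 (by positivity)
    have hglt : s2 / (x * s3) < 1 := by
      rw [div_lt_one (by positivity)]
      have h : s2 ^ 2 < (x * s3) ^ 2 := by
        rw [hs2sq, mul_pow, hs3sq]; nlinarith
      exact lt_of_pow_lt_pow_left₀ 2 (by positivity) h
    have hgge : 0 ≤ s2 / (x * s3) := by positivity
    have harc2 : HasDerivAt (fun a : ℝ => Real.arcsin (Real.sqrt (1 - a ^ 2) / (a * s3)))
        ((1 / Real.sqrt (1 - (s2 / (x * s3)) ^ 2)) *
          (((-(2 * x) / (2 * s2)) * (x * s3) - s2 * s3) / (x * s3) ^ 2)) x := by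
      have := (Real.hasDerivAt_arcsin (by linarith : s2 / (x * s3) ≠ -1) hglt.ne).comp x hg4
      simpa [Function.comp_def] using this
    have hsq2 : Real.sqrt (1 - (s2 / (x * s3)) ^ 2) = s1 / (x * s3) := by
      have h : 1 - (s2 / (x * s3)) ^ 2 = (s1 / (x * s3)) ^ 2 := by
        rw [div_pow, div_pow, mul_pow, hs1sq, hs2sq, hs3sq]
        field_simp
        ring
      rw [h, Real.sqrt_sq (by positivity)]
    -- total derivative
    have htot : HasDerivAt (fun α => (2 / π) * (β * Real.arcsin (Real.sqrt (α ^ 2 * β ^ 2 - 1) / s3)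
        + Real.arcsin (Real.sqrt (1 - α ^ 2) / (α * s3))))
        ((2 / π) * (β * ((1 / Real.sqrt (1 - (s1 / s3) ^ 2)) * ((2 * x * β ^ 2 / (2 * s1)) / s3))
          + ((1 / Real.sqrt (1 - (s2 / (x * s3)) ^ 2)) *
            (((-(2 * x) / (2 * s2)) * (x * s3) - s2 * s3) / (x * s3) ^ 2)))) x :=
      (((harc1.const_mul β).add harc2).const_mul (2 / π))
    rw [htot.deriv]
    rw [hsq1, hsq2]
    have key : β * ((1 / (β * s2 / s3)) * ((2 * x * β ^ 2 / (2 * s1)) / s3))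
        + ((1 / (s1 / (x * s3))) * (((-(2 * x) / (2 * s2)) * (x * s3) - s2 * s3) / (x * s3) ^ 2))
        = s1 / (x * s2) := by
      field_simp
      linear_combination (-1) * hs1sq + (-1) * hs2sq
    rw [key]
    positivity
  have hmono : StrictMonoOn (fun α => (2 / π) * (β * Real.arcsin (Real.sqrt (α ^ 2 * β ^ 2 - 1) / Real.sqrt (β ^ 2 - 1))
      + Real.arcsin (Real.sqrt (1 - α ^ 2) / (α * Real.sqrt (β ^ 2 - 1))))) (Icc (1/β) 1) :=
    strictMonoOn_of_deriv_pos (convex_Icc _ _) hcont hderiv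
  have hIoo : Ioo (1/β) 1 ⊆ Icc (1/β) 1 := Ioo_subset_Icc_self
  refine ⟨hcont.mono hIoo, hmono.mono hIoo, ?_, ?_, ?_⟩
  · have h := (hcont _ (left_mem_Icc.2 hab.le)).tendsto
    rw [hv0] at h
    have := h.mono_left (nhdsWithin_mono _ hIoo)
    rwa [nhdsWithin_Ioo_eq_nhdsGT hab] at this
  · have h := (hcont _ (right_mem_Icc.2 hab.le)).tendsto
    rw [hv1] at h
    have := h.mono_left (nhdsWithin_mono _ hIoo)
    rwa [nhdsWithin_Ioo_eq_nhdsLT hab] at this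
  · intro α hα
    constructor
    · have h := hmono (left_mem_Icc.2 hab.le) (hIoo hα) hα.1
      beta_reduce at h
      rwa [hv0] at h
    · have h := hmono (hIoo hα) (right_mem_Icc.2 hab.le) hα.2
      beta_reduce at h
      rwa [hv1] at h
end

section
/- Let α, β > 0 with αβ > 1 and α < 1. If x ∈ ℝ satisfies cos(x) + α cos(βx) = 0 and sin(x) + αβ sin(βx) = 0, then sin²(x) = β²(1−α²)/(β²−1) and sin²(βx) = (1−α²)/(α²(β²−1)). -/
theorem stmt_6 (α β x : ℝ) (hα0 : 0 < α) (hβ0 : 0 < β) (hαβ : 1 < α * β) (hα1 : α < 1)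
    (h0 : Real.cos x + α * Real.cos (β * x) = 0)
    (h1 : Real.sin x + α * β * Real.sin (β * x) = 0) :
    Real.sin x ^ 2 = β ^ 2 * (1 - α ^ 2) / (β ^ 2 - 1) ∧
    Real.sin (β * x) ^ 2 = (1 - α ^ 2) / (α ^ 2 * (β ^ 2 - 1)) := by
  have hβ1 : 1 < β := by nlinarith
  have hb : β ^ 2 - 1 > 0 := by nlinarith
  have hα2 : α ^ 2 > 0 := by positivity
  have p1 := Real.sin_sq_add_cos_sq x
  have p2 := Real.sin_sq_add_cos_sq (β * x)
  have e0 : Real.cos x = -(α * Real.cos (β * x)) := by linarith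
  have e1 : Real.sin x = -(α * β * Real.sin (β * x)) := by linarith
  have key : Real.sin (β * x) ^ 2 * (α ^ 2 * (β ^ 2 - 1)) = 1 - α ^ 2 := by
    rw [e0, e1] at p1
    nlinarith [p2]
  constructor
  · rw [eq_div_iff (by linarith), e1]
    nlinarith [key]
  · rw [eq_div_iff (by positivity)]
    linarith [key]
end

section
/- Let α ∈ (0,1) and β > 1 with αβ > 1, and set f(x) = cos(x) + α cos(βx). There exist positive constants c₀ and c₁, depending only on α and β, such that for all x ∈ ℝ: |f''(x)| ≥ c₀ − c₁·√(f(x)² + f'(x)²). -/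
theorem stmt_7 (α β : ℝ) (hα0 : 0 < α) (hα1 : α < 1) (hβ : 1 < β) (hαβ : 1 < α * β) :
    ∃ c₀ c₁ : ℝ, 0 < c₀ ∧ 0 < c₁ ∧ ∀ x : ℝ,
      c₀ - c₁ * Real.sqrt ((Real.cos x + α * Real.cos (β * x)) ^ 2
        + (-Real.sin x - α * β * Real.sin (β * x)) ^ 2)
      ≤ |(-Real.cos x - α * β ^ 2 * Real.cos (β * x))| := by
  have hβ0 : (0:ℝ) < β := lt_trans one_pos hβ
  have hb2 : 0 < β ^ 2 - 1 := by nlinarith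
  refine ⟨(β ^ 2 - 1) * (α * β - 1) / β, β ^ 2,
    div_pos (mul_pos hb2 (by linarith)) hβ0, by positivity, ?_⟩
  intro x
  set F := Real.cos x + α * Real.cos (β * x) with hF
  set F' := -Real.sin x - α * β * Real.sin (β * x) with hF'
  set F'' := -Real.cos x - α * β ^ 2 * Real.cos (β * x) with hF''
  set s := Real.sqrt (F ^ 2 + F' ^ 2) with hs
  have hs0 : 0 ≤ s := Real.sqrt_nonneg _
  have hsF : |F| ≤ s := by
    rw [hs]
    calc |F| = Real.sqrt (F ^ 2) := (Real.sqrt_sq_eq_abs F).symm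
      _ ≤ _ := Real.sqrt_le_sqrt (by nlinarith [sq_nonneg F'])
  have hsF' : |F'| ≤ s := by
    rw [hs]
    calc |F'| = Real.sqrt (F' ^ 2) := (Real.sqrt_sq_eq_abs F').symm
      _ ≤ _ := Real.sqrt_le_sqrt (by nlinarith [sq_nonneg F])
  have hsin1 : |Real.sin x| ≤ 1 := Real.abs_sin_le_one x
  have hpyth : Real.sin (β * x) ^ 2 + Real.cos (β * x) ^ 2 = 1 :=
    Real.sin_sq_add_cos_sq _
  have hcos1 : |Real.cos (β * x)| ≤ 1 := Real.abs_cos_le_one _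
  have h2 : 1 - |Real.cos (β * x)| ≤ |Real.sin (β * x)| := by
    nlinarith [sq_abs (Real.sin (β * x)), sq_abs (Real.cos (β * x)),
      abs_nonneg (Real.sin (β * x)), abs_nonneg (Real.cos (β * x))]
  have h3 : α * β * |Real.sin (β * x)| ≤ |F'| + 1 := by
    have e : α * β * Real.sin (β * x) = -F' - Real.sin x := by rw [hF']; ring
    calc α * β * |Real.sin (β * x)| = |α * β * Real.sin (β * x)| := by
          rw [abs_mul, abs_of_pos (by positivity : (0:ℝ) < α * β)]
      _ = |-F' - Real.sin x| := by rw [e]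
      _ ≤ |-F'| + |Real.sin x| := abs_sub _ _
      _ ≤ |F'| + 1 := by rw [abs_neg]; linarith
  have h4 : α * (β ^ 2 - 1) * |Real.cos (β * x)| ≤ |F''| + |F| := by
    have e : α * (β ^ 2 - 1) * Real.cos (β * x) = -(F'' + F) := by
      rw [hF'', hF]; ring
    calc α * (β ^ 2 - 1) * |Real.cos (β * x)|
        = |α * (β ^ 2 - 1) * Real.cos (β * x)| := by
          rw [abs_mul, abs_of_pos (by positivity : (0:ℝ) < α * (β ^ 2 - 1))]
      _ = |F'' + F| := by rw [e, abs_neg]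
      _ ≤ |F''| + |F| := abs_add_le _ _
  have hc : α * β - 1 - |F'| ≤ α * β * |Real.cos (β * x)| := by
    have h2' := mul_le_mul_of_nonneg_left h2 (by positivity : (0:ℝ) ≤ α * β)
    nlinarith
  have hkey : (β ^ 2 - 1) * (α * β - 1) - (β ^ 2 - 1) * |F'| - β * |F|
      ≤ β * |F''| := by
    have t1 := mul_le_mul_of_nonneg_left h4 hβ0.le
    have t2 := mul_le_mul_of_nonneg_left hc hb2.le
    nlinarith
  have hc0 : (β ^ 2 - 1) * (α * β - 1) / β * β = (β ^ 2 - 1) * (α * β - 1) :=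
    div_mul_cancel₀ _ hβ0.ne'
  have p1 : (β ^ 2 - 1) * |F'| ≤ (β ^ 2 - 1) * s := mul_le_mul_of_nonneg_left hsF' hb2.le
  have p2 : β * |F| ≤ β * s := mul_le_mul_of_nonneg_left hsF hβ0.le
  have p3 : 0 ≤ (β - 1) * (β ^ 2 - 1) * s :=
    mul_nonneg (mul_nonneg (by linarith : (0:ℝ) ≤ β - 1) hb2.le) hs0
  have goalβ : β * ((β ^ 2 - 1) * (α * β - 1) / β - β ^ 2 * s) ≤ β * |F''| := by
    linarith [hc0, hkey, p1, p2, p3]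
  exact le_of_mul_le_mul_left goalβ hβ0
end

section
/- Let α ∈ (0,1), β > 1 with αβ > 1, f(x) = cos(x) + α cos(βx), and suppose κ > 0 satisfies: whenever f(x)² + f'(x)² ≤ κ², one has |f''(x)| ≥ κ. Then for any two distinct points s < t with f'(s) = f'(t) = 0, f(s)² + f'(s)² < κ², and f(t)² + f'(t)² < κ², we have t − s ≥ 2κ/(1 + αβ³). -/
theorem stmt_8 (α β κ s t : ℝ) (hα0 : 0 < α) (hα1 : α < 1) (hβ : 1 < β) (hαβ : 1 < α * β)
    (hκ : 0 < κ)
    (f f' f'' : ℝ → ℝ)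
    (hf : ∀ x, f x = Real.cos x + α * Real.cos (β * x))
    (hf' : ∀ x, f' x = -Real.sin x - α * β * Real.sin (β * x))
    (hf'' : ∀ x, f'' x = -Real.cos x - α * β ^ 2 * Real.cos (β * x))
    (hκprop : ∀ x, f x ^ 2 + f' x ^ 2 ≤ κ ^ 2 → κ ≤ |f'' x|)
    (hst : s < t) (hfs : f' s = 0) (hft : f' t = 0)
    (hEs : f s ^ 2 + f' s ^ 2 < κ ^ 2) (hEt : f t ^ 2 + f' t ^ 2 < κ ^ 2) :
    2 * κ / (1 + α * β ^ 3) ≤ t - s := by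
  have hβ0 : (0:ℝ) < β := by linarith
  have hM : (0:ℝ) < 1 + α * β ^ 3 := by positivity
  -- Lipschitz bound on f''
  have keycos : ∀ a b : ℝ, |Real.cos a - Real.cos b| ≤ |a - b| := by
    intro a b
    have h := Convex.norm_image_sub_le_of_norm_deriv_le (f := Real.cos) (C := 1)
      (s := Set.univ)
      (fun x _ => Real.differentiable_cos x)
      (fun x _ => by
        rw [Real.deriv_cos, Real.norm_eq_abs, abs_neg]
        exact abs_le.mpr ⟨Real.neg_one_le_sin x, Real.sin_le_one x⟩)
      convex_univ (Set.mem_univ b) (Set.mem_univ a)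
    simpa [Real.norm_eq_abs] using h
  have hLip : ∀ x y : ℝ, |f'' x - f'' y| ≤ (1 + α * β ^ 3) * |x - y| := by
    intro x y
    rw [hf'' x, hf'' y]
    have h1 := keycos x y
    have h2 := keycos (β * x) (β * y)
    have h3 : |β * x - β * y| = β * |x - y| := by
      rw [← mul_sub, abs_mul, abs_of_pos hβ0]
    rw [h3] at h2
    have habs : |(-Real.cos x - α * β ^ 2 * Real.cos (β * x)) -
        (-Real.cos y - α * β ^ 2 * Real.cos (β * y))| ≤
        |Real.cos x - Real.cos y| + α * β ^ 2 * |Real.cos (β * x) - Real.cos (β * y)| := by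
      have he : (-Real.cos x - α * β ^ 2 * Real.cos (β * x)) -
          (-Real.cos y - α * β ^ 2 * Real.cos (β * y)) =
          -(Real.cos x - Real.cos y) + -(α * β ^ 2 * (Real.cos (β * x) - Real.cos (β * y))) := by
        ring
      rw [he]
      refine (abs_add_le _ _).trans ?_
      rw [abs_neg, abs_neg, abs_mul, abs_of_nonneg (by positivity : (0:ℝ) ≤ α * β ^ 2)]
    nlinarith [mul_le_mul_of_nonneg_left h2 (by positivity : (0:ℝ) ≤ α * β ^ 2),
      abs_nonneg (x - y)]
  -- derivative of f' is f''
  have hD : ∀ x : ℝ, HasDerivAt f' (f'' x) x := by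
    intro x
    have h1 : HasDerivAt (fun y : ℝ => -Real.sin y - α * β * Real.sin (β * y))
        (-Real.cos x - α * β ^ 2 * Real.cos (β * x)) x := by
      have hs1 : HasDerivAt (fun y : ℝ => Real.sin y) (Real.cos x) x := Real.hasDerivAt_sin x
      have hs2 : HasDerivAt (fun y : ℝ => Real.sin (β * y)) (Real.cos (β * x) * β) x := by
        have := (Real.hasDerivAt_sin (β * x)).comp x ((hasDerivAt_id x).const_mul β)
        exact this.congr_deriv (by ring)
      have := hs1.neg.sub ((hs2.const_mul (α * β)))
      exact this.congr_deriv (by ring)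
    have heq : f' = fun y : ℝ => -Real.sin y - α * β * Real.sin (β * y) := funext hf'
    rw [hf'' x, heq]
    exact h1
  have hcontf' : Continuous f' := by
    have heq : f' = fun y : ℝ => -Real.sin y - α * β * Real.sin (β * y) := funext hf'
    rw [heq]; fun_prop
  have hcontf'' : Continuous f'' := by
    have heq : f'' = fun y : ℝ => -Real.cos y - α * β ^ 2 * Real.cos (β * y) := funext hf''
    rw [heq]; fun_prop
  have hκs : κ ≤ |f'' s| := hκprop s hEs.le
  have hκt : κ ≤ |f'' t| := hκprop t hEt.le
  by_contra hcon
  push_neg at hcon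
  have hlt : (t - s) * (1 + α * β ^ 3) < 2 * κ := (lt_div_iff₀ hM).mp hcon
  rcases le_abs'.mp hκs with hs1 | hs1 <;> rcases le_abs'.mp hκt with ht1 | ht1
  · -- f'' s ≤ -κ, f'' t ≤ -κ : f'' < 0 on [s,t], f' strictly decreasing, contradiction
    have key : ∀ x ∈ Set.Icc s t, f'' x < 0 := by
      intro x hx
      rcases le_total (x - s) (t - x) with hc | hc
      · have h1 := hLip x s
        rw [abs_of_nonneg (by linarith [hx.1] : (0:ℝ) ≤ x - s)] at h1
        have h2 := le_of_abs_le h1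
        linarith [mul_le_mul_of_nonneg_left hc hM.le]
      · have h1 := hLip x t
        rw [abs_of_nonpos (by linarith [hx.2] : x - t ≤ 0)] at h1
        have h2 := le_of_abs_le h1
        linarith [mul_le_mul_of_nonneg_left hc hM.le]
    have hanti : StrictAntiOn f' (Set.Icc s t) := by
      refine strictAntiOn_of_deriv_neg (convex_Icc s t) hcontf'.continuousOn ?_
      intro x hx
      rw [interior_Icc] at hx
      rw [(hD x).deriv]
      exact key x ⟨hx.1.le, hx.2.le⟩
    have := hanti (Set.left_mem_Icc.mpr hst.le) (Set.right_mem_Icc.mpr hst.le) hst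
    rw [hfs, hft] at this
    exact lt_irrefl 0 this
  · -- f'' s ≤ -κ, κ ≤ f'' t : IVT gives zero of f''
    obtain ⟨c, hc, hc0⟩ := intermediate_value_Icc hst.le hcontf''.continuousOn
      (show (0:ℝ) ∈ Set.Icc (f'' s) (f'' t) from ⟨by linarith, by linarith⟩)
    have h1 := hLip c s
    rw [abs_of_nonneg (by linarith [hc.1] : (0:ℝ) ≤ c - s)] at h1
    have h1' := le_of_abs_le h1
    have h2 := hLip t c
    rw [abs_of_nonneg (by linarith [hc.2] : (0:ℝ) ≤ t - c)] at h2
    have h2' := le_of_abs_le h2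
    rw [hc0] at h1' h2'
    linarith
  · -- κ ≤ f'' s, f'' t ≤ -κ : IVT (decreasing) gives zero of f''
    obtain ⟨c, hc, hc0⟩ := intermediate_value_Icc' hst.le hcontf''.continuousOn
      (show (0:ℝ) ∈ Set.Icc (f'' t) (f'' s) from ⟨by linarith, by linarith⟩)
    have h1 := hLip s c
    rw [abs_of_nonpos (by linarith [hc.1] : s - c ≤ 0)] at h1
    have h1' := le_of_abs_le h1
    have h2 := hLip c t
    rw [abs_of_nonpos (by linarith [hc.2] : c - t ≤ 0)] at h2
    have h2' := le_of_abs_le h2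
    rw [hc0] at h1' h2'
    linarith
  · -- κ ≤ f'' s, κ ≤ f'' t : f'' > 0 on [s,t], f' strictly increasing, contradiction
    have key : ∀ x ∈ Set.Icc s t, 0 < f'' x := by
      intro x hx
      rcases le_total (x - s) (t - x) with hc | hc
      · have h1 := hLip s x
        rw [abs_of_nonpos (by linarith [hx.1] : s - x ≤ 0)] at h1
        have h2 := le_of_abs_le h1
        linarith [mul_le_mul_of_nonneg_left hc hM.le]
      · have h1 := hLip t x
        rw [abs_of_nonneg (by linarith [hx.2] : (0:ℝ) ≤ t - x)] at h1
        have h2 := le_of_abs_le h1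
        linarith [mul_le_mul_of_nonneg_left hc hM.le]
    have hmono : StrictMonoOn f' (Set.Icc s t) := by
      refine strictMonoOn_of_deriv_pos (convex_Icc s t) hcontf'.continuousOn ?_
      intro x hx
      rw [interior_Icc] at hx
      rw [(hD x).deriv]
      exact key x ⟨hx.1.le, hx.2.le⟩
    have := hmono (Set.left_mem_Icc.mpr hst.le) (Set.right_mem_Icc.mpr hst.le) hst
    rw [hfs, hft] at this
    exact lt_irrefl 0 this
end

section
/- Let θ be a real-valued solution of θ'(x) = γV(x) + k cos(2θ(x)) on a closed interval J = [a₀, a₁], where V(x) ≥ ε > 0 on J and γε > k > 0, and suppose θ(a₁) ≤ θ(a₀) + π. Then |∫_{a₀}^{a₁} cos(2θ(x)) dx| ≤ 2/(γε − k) and |∫_{a₀}^{a₁} sin(2θ(x)) dx| ≤ 2/(γε − k). -/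
open Set Real MeasureTheory intervalIntegral

private lemma absCos_per : Function.Periodic (fun u : ℝ => |Real.cos (2*u)|) (π/2) := by
  intro x
  have h : 2 * (x + π/2) = 2*x + π := by ring
  simp only [h, Real.cos_add_pi, abs_neg]

private lemma contAbsCos : Continuous fun u : ℝ => |Real.cos (2*u)| :=
  (Real.continuous_cos.comp (continuous_const.mul continuous_id)).abs

private lemma int_absCos_halfpi : ∫ u in (0:ℝ)..(π/2), |Real.cos (2*u)| = 1 := by
  have hpi := Real.pi_pos
  have h1 : ∫ u in (0:ℝ)..(π/4), |Real.cos (2*u)| = 1/2 := by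
    rw [intervalIntegral.integral_congr (g := fun u => Real.cos (2*u))
      (fun u hu => by
        rw [uIcc_of_le (by linarith)] at hu
        exact abs_of_nonneg (Real.cos_nonneg_of_mem_Icc
          ⟨by nlinarith [hu.1], by nlinarith [hu.2]⟩))]
    rw [intervalIntegral.integral_comp_mul_left (f := fun x => Real.cos x) two_ne_zero]
    rw [show (2:ℝ)*(π/4) = π/2 by ring, integral_cos, Real.sin_pi_div_two]
    norm_num
  have h2 : ∫ u in (π/4)..(π/2), |Real.cos (2*u)| = 1/2 := by
    rw [intervalIntegral.integral_congr (g := fun u => -Real.cos (2*u))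
      (fun u hu => by
        rw [uIcc_of_le (by linarith)] at hu
        exact abs_of_nonpos (Real.cos_nonpos_of_pi_div_two_le_of_le
          (by nlinarith [hu.1]) (by nlinarith [hu.2])))]
    rw [intervalIntegral.integral_neg,
      intervalIntegral.integral_comp_mul_left (f := fun x => Real.cos x) two_ne_zero]
    rw [show (2:ℝ)*(π/2) = π by ring, show (2:ℝ)*(π/4) = π/2 by ring,
      integral_cos, Real.sin_pi, Real.sin_pi_div_two]
    norm_num
  rw [← intervalIntegral.integral_add_adjacent_intervals
    (contAbsCos.intervalIntegrable (μ := volume) 0 (π/4)) (contAbsCos.intervalIntegrable (μ := volume) (π/4) (π/2)),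
    h1, h2]
  norm_num

private lemma int_absCos_le (b c : ℝ) (hbc : b ≤ c) (h : c - b ≤ π) :
    ∫ u in b..c, |Real.cos (2*u)| ≤ 2 := by
  have h1 : ∫ u in b..(b+π/2), |Real.cos (2*u)| = 1 := by
    have := absCos_per.intervalIntegral_add_eq b 0
    simpa [int_absCos_halfpi] using this
  have h2 : ∫ u in (b+π/2)..(b+π), |Real.cos (2*u)| = 1 := by
    have := absCos_per.intervalIntegral_add_eq (b+π/2) 0
    have he : b + π/2 + π/2 = b + π := by ring
    rw [he] at this
    simpa [int_absCos_halfpi] using this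
  have hfull : ∫ u in b..(b+π), |Real.cos (2*u)| = 2 := by
    rw [← intervalIntegral.integral_add_adjacent_intervals
      (contAbsCos.intervalIntegrable (μ := volume) b (b+π/2)) (contAbsCos.intervalIntegrable (μ := volume) (b+π/2) (b+π)),
      h1, h2]
    norm_num
  have hsplit := intervalIntegral.integral_add_adjacent_intervals
    (contAbsCos.intervalIntegrable (μ := volume) b c) (contAbsCos.intervalIntegrable (μ := volume) c (b+π))
  have hnn : 0 ≤ ∫ u in c..(b+π), |Real.cos (2*u)| :=
    intervalIntegral.integral_nonneg (by linarith) (fun u _ => abs_nonneg _)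
  rw [hfull] at hsplit
  linarith

private lemma key_le (c a₀ a₁ : ℝ) (hc : 0 < c) (ha : a₀ ≤ a₁) (θ θ' : ℝ → ℝ)
    (hθd : ∀ x ∈ Icc a₀ a₁, HasDerivAt θ (θ' x) x)
    (hθ'c : ∀ x ∈ Icc a₀ a₁, c ≤ θ' x)
    (f : ℝ → ℝ) (hf : Continuous f) (hfnn : ∀ x, 0 ≤ f x) :
    ∫ x in a₀..a₁, f (θ x) ≤ (∫ u in θ a₀..θ a₁, f u) / c := by
  have hθc : ContinuousOn θ (Icc a₀ a₁) :=
    fun x hx => (hθd x hx).continuousAt.continuousWithinAt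
  set ψ : ℝ → ℝ := IccExtend ha ((Icc a₀ a₁).restrict θ) with hψdef
  have hψ : Continuous ψ := hθc.restrict.Icc_extend'
  have hψθ : ∀ x ∈ Icc a₀ a₁, ψ x = θ x := fun x hx => by
    rw [hψdef, IccExtend_of_mem ha _ hx]; rfl
  set F : ℝ → ℝ := fun u => ∫ t in (0:ℝ)..u, f t with hFdef
  have hF : ∀ u, HasDerivAt F (f u) u := fun u =>
    (hf.integral_hasStrictDerivAt 0 u).hasDerivAt
  have hFcont : Continuous F :=
    (Differentiable.continuous fun u => (hF u).differentiableAt)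
  set g : ℝ → ℝ := fun x => f (ψ x) with hgdef
  have hg : Continuous g := hf.comp hψ
  have hI : Differentiable ℝ fun x => ∫ t in a₀..x, g t :=
    fun x => ((hg.integral_hasStrictDerivAt a₀ x).hasDerivAt).differentiableAt
  set G : ℝ → ℝ := fun x => F (θ x) / c - ∫ t in a₀..x, g t with hGdef
  have hGmono : MonotoneOn G (Icc a₀ a₁) := by
    apply monotoneOn_of_hasDerivWithinAt_nonneg (convex_Icc a₀ a₁)
      (f' := fun x => f (θ x) * θ' x / c - g x)
    · exact ((hFcont.comp_continuousOn hθc).div_const c).sub hI.continuous.continuousOn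
    · intro x hx
      rw [interior_Icc] at hx
      have hxI : x ∈ Icc a₀ a₁ := Ioo_subset_Icc_self hx
      have h1 : HasDerivAt (fun x => F (θ x) / c) (f (θ x) * θ' x / c) x :=
        ((hF (θ x)).comp x (hθd x hxI)).div_const c
      have h2 : HasDerivAt (fun x => ∫ t in a₀..x, g t) (g x) x :=
        (hg.integral_hasStrictDerivAt a₀ x).hasDerivAt
      exact (h1.sub h2).hasDerivWithinAt
    · intro x hx
      rw [interior_Icc] at hx
      have hxI : x ∈ Icc a₀ a₁ := Ioo_subset_Icc_self hx
      have hgx : g x = f (θ x) := by rw [hgdef]; simp only [hψθ x hxI]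
      rw [hgx, sub_nonneg, le_div_iff₀ hc]
      exact mul_le_mul_of_nonneg_left (hθ'c x hxI) (hfnn _)
  have hG : G a₀ ≤ G a₁ := hGmono (left_mem_Icc.2 ha) (right_mem_Icc.2 ha) ha
  simp only [hGdef, intervalIntegral.integral_same, sub_zero] at hG
  have hFF : F (θ a₁) - F (θ a₀) = ∫ u in θ a₀..θ a₁, f u := by
    rw [hFdef]
    simp only
    rw [← intervalIntegral.integral_add_adjacent_intervals
      (hf.intervalIntegrable 0 (θ a₀)) (hf.intervalIntegrable (θ a₀) (θ a₁))]
    ring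
  have hcongr : ∫ x in a₀..a₁, f (θ x) = ∫ t in a₀..a₁, g t :=
    intervalIntegral.integral_congr (fun x hx => by
      rw [uIcc_of_le ha] at hx
      rw [hgdef]; simp only [hψθ x hx])
  rw [hcongr, ← hFF, sub_div]
  linarith

theorem stmt_16 (k γ ε a₀ a₁ : ℝ) (hk : 0 < k) (hε : 0 < ε) (hγε : k < γ * ε)
    (ha : a₀ ≤ a₁) (V θ : ℝ → ℝ)
    (hV : ∀ x ∈ Icc a₀ a₁, ε ≤ V x)
    (hθ : ∀ x ∈ Icc a₀ a₁, HasDerivAt θ (γ * V x + k * Real.cos (2 * θ x)) x)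
    (hend : θ a₁ ≤ θ a₀ + π) :
    |∫ x in a₀..a₁, Real.cos (2 * θ x)| ≤ 2 / (γ * ε - k) ∧
    |∫ x in a₀..a₁, Real.sin (2 * θ x)| ≤ 2 / (γ * ε - k) := by
  have hc : 0 < γ * ε - k := by linarith
  have hγ : 0 < γ := by nlinarith
  set θ' : ℝ → ℝ := fun x => γ * V x + k * Real.cos (2 * θ x) with hθ'def
  have hθ'c : ∀ x ∈ Icc a₀ a₁, γ * ε - k ≤ θ' x := by
    intro x hx
    have h1 := hV x hx
    have h2 := Real.neg_one_le_cos (2 * θ x)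
    have h3 : γ * ε ≤ γ * V x := mul_le_mul_of_nonneg_left h1 hγ.le
    have h4 : k * (-1) ≤ k * Real.cos (2 * θ x) := mul_le_mul_of_nonneg_left h2 hk.le
    rw [hθ'def]
    simp only
    linarith
  have hθd : ∀ x ∈ Icc a₀ a₁, HasDerivAt θ (θ' x) x := fun x hx => hθ x hx
  have hmono : MonotoneOn θ (Icc a₀ a₁) := by
    apply monotoneOn_of_hasDerivWithinAt_nonneg (convex_Icc a₀ a₁) (f' := θ')
      (fun x hx => (hθd x hx).continuousAt.continuousWithinAt)
    · intro x hx
      rw [interior_Icc] at hx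
      exact (hθd x (Ioo_subset_Icc_self hx)).hasDerivWithinAt
    · intro x hx
      rw [interior_Icc] at hx
      exact le_trans hc.le (hθ'c x (Ioo_subset_Icc_self hx))
  have hθle : θ a₀ ≤ θ a₁ := hmono (left_mem_Icc.2 ha) (right_mem_Icc.2 ha) ha
  constructor
  · have hk1 := key_le (γ * ε - k) a₀ a₁ hc ha θ θ' hθd hθ'c
      (fun u => |Real.cos (2*u)|) contAbsCos (fun u => abs_nonneg _)
    have hle2 : ∫ u in θ a₀..θ a₁, |Real.cos (2*u)| ≤ 2 :=
      int_absCos_le _ _ hθle (by linarith)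
    calc |∫ x in a₀..a₁, Real.cos (2 * θ x)|
        ≤ ∫ x in a₀..a₁, |Real.cos (2 * θ x)| :=
          intervalIntegral.abs_integral_le_integral_abs ha
      _ ≤ (∫ u in θ a₀..θ a₁, |Real.cos (2*u)|) / (γ * ε - k) := hk1
      _ ≤ 2 / (γ * ε - k) := by
          apply div_le_div_of_nonneg_right hle2 hc.le
  · have hcsin : Continuous fun u : ℝ => |Real.sin (2*u)| :=
      (Real.continuous_sin.comp (continuous_const.mul continuous_id)).abs
    have hk1 := key_le (γ * ε - k) a₀ a₁ hc ha θ θ' hθd hθ'c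
      (fun u => |Real.sin (2*u)|) hcsin (fun u => abs_nonneg _)
    have hle2 : ∫ u in θ a₀..θ a₁, |Real.sin (2*u)| ≤ 2 := by
      have hcongr : (∫ u in θ a₀..θ a₁, |Real.sin (2*u)|)
          = ∫ u in θ a₀..θ a₁, (fun t => |Real.cos (2*t)|) (u - π/4) := by
        apply intervalIntegral.integral_congr
        intro u _
        simp only
        rw [show 2*(u - π/4) = 2*u - π/2 by ring, Real.cos_sub_pi_div_two]
      rw [hcongr, intervalIntegral.integral_comp_sub_right (fun t => |Real.cos (2*t)|) (π/4)]
      exact int_absCos_le _ _ (by linarith) (by linarith)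
    calc |∫ x in a₀..a₁, Real.sin (2 * θ x)|
        ≤ ∫ x in a₀..a₁, |Real.sin (2 * θ x)| :=
          intervalIntegral.abs_integral_le_integral_abs ha
      _ ≤ (∫ u in θ a₀..θ a₁, |Real.sin (2*u)|) / (γ * ε - k) := hk1
      _ ≤ 2 / (γ * ε - k) := by
          apply div_le_div_of_nonneg_right hle2 hc.le
end

section
/- Let k > 0, γ ∈ ℝ, and V ∈ L¹(ℝ). Suppose θ solves θ'(x) = γV(x) + k cos(2θ(x)) on ℝ with lim_{x→+∞} θ(x) = −π/4. Then for every x ∈ ℝ, |θ(x) + π/4| ≤ h(|γ| ∫ₓ^∞ |V(t)| dt), where h(a) = a + (π/2)⌊2a/π⌋. -/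
open Set Real Filter MeasureTheory Topology


noncomputable def pind (t : ℝ) : ℝ := if 0 < Real.sin (2*t) then 1 else 0

lemma pind_nonneg (t : ℝ) : 0 ≤ pind t := by unfold pind; split <;> norm_num

lemma pind_le_one (t : ℝ) : pind t ≤ 1 := by unfold pind; split <;> norm_num

lemma pind_meas : Measurable pind := by
  unfold pind
  exact Measurable.ite (measurableSet_lt measurable_const ((Real.measurable_sin.comp (measurable_const.mul measurable_id)))) measurable_const measurable_const

lemma pind_ii (a b : ℝ) : IntervalIntegrable pind volume a b := by
  apply IntervalIntegrable.mono_fun' (g := fun _ => (1:ℝ)) (intervalIntegrable_const)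
  · exact pind_meas.aestronglyMeasurable.restrict
  · filter_upwards with t
    rw [Real.norm_eq_abs, abs_of_nonneg (pind_nonneg t)]
    exact pind_le_one t

lemma pind_periodic : Function.Periodic pind π := by
  intro t
  unfold pind
  rw [show 2*(t+π) = 2*t + 2*π by ring, Real.sin_add_two_pi]

noncomputable def f0 (s : ℝ) : ℝ := ∫ t in (0:ℝ)..s, pind t

lemma f0_mono : Monotone f0 := by
  intro a b hab
  have h := intervalIntegral.integral_add_adjacent_intervals (pind_ii 0 a) (pind_ii a b)
  have h2 : 0 ≤ ∫ t in a..b, pind t :=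
    intervalIntegral.integral_nonneg hab (fun u _ => pind_nonneg u)
  unfold f0
  linarith [h]

lemma f0_base {r : ℝ} (h0 : 0 ≤ r) (h1 : r ≤ π/2) : f0 r = r := by
  unfold f0
  have hcong : ∀ᵐ t : ℝ, t ∈ Set.uIoc (0:ℝ) r → pind t = 1 := by
    have hnull : (volume : Measure ℝ) {(π/2 : ℝ)} = 0 := volume_singleton
    have hsub : {t : ℝ | ¬ (t ∈ Set.uIoc (0:ℝ) r → pind t = 1)} ⊆ {(π/2:ℝ)} := by
      intro t ht
      simp only [Set.mem_setOf_eq, _root_.not_imp] at ht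
      obtain ⟨htmem, htne⟩ := ht
      rw [Set.uIoc_of_le h0] at htmem
      by_contra hne
      apply htne
      have htpos : 0 < t := htmem.1
      have htlt : t < π/2 := lt_of_le_of_ne (le_trans htmem.2 h1) (by simpa using hne)
      have : 0 < Real.sin (2*t) := Real.sin_pos_of_pos_of_lt_pi (by linarith) (by linarith)
      unfold pind
      rw [if_pos this]
    have : ∀ᵐ t : ℝ, ¬ t ∈ {t : ℝ | ¬ (t ∈ Set.uIoc (0:ℝ) r → pind t = 1)} := by
      rw [ae_iff]
      simp only [not_not]
      exact measure_mono_null hsub hnull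
    filter_upwards [this] with t ht
    simpa using ht
  rw [intervalIntegral.integral_congr_ae hcong]
  simp

lemma f0_upper : (∫ t in (π/2)..π, pind t) = 0 := by
  have : EqOn pind (fun _ => (0:ℝ)) (uIcc (π/2) π) := by
    intro t ht
    rw [uIcc_of_le (by linarith [Real.pi_pos])] at ht
    have h1 : Real.sin (2*t) ≤ 0 := by
      have : Real.sin (2*t - 2*π) ≤ 0 := by
        apply Real.sin_nonpos_of_nonpos_of_neg_pi_le
        · linarith [ht.2]
        · linarith [ht.1, Real.pi_pos]
      rwa [show 2*t - 2*π = 2*t - 2*π by ring, Real.sin_sub_two_pi] at this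
    unfold pind
    rw [if_neg (by linarith)]
  rw [intervalIntegral.integral_congr this]
  simp

lemma f0_add_pi (s : ℝ) : f0 (s + π) = f0 s + π/2 := by
  have hsplit := intervalIntegral.integral_add_adjacent_intervals (pind_ii 0 s) (pind_ii s (s+π))
  have hper : (∫ t in s..(s+π), pind t) = ∫ t in (0:ℝ)..(0+π), pind t :=
    pind_periodic.intervalIntegral_add_eq s 0
  have hsplit2 := intervalIntegral.integral_add_adjacent_intervals (pind_ii 0 (π/2)) (pind_ii (π/2) π)
  have hbase : (∫ t in (0:ℝ)..(π/2), pind t) = π/2 := f0_base (le_of_lt (by positivity)) le_rfl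
  have hpi : (∫ t in (0:ℝ)..π, pind t) = π/2 := by
    rw [← hsplit2, hbase, f0_upper]; ring
  unfold f0
  rw [← hsplit, hper, zero_add, hpi]

lemma f0_nat (m : ℕ) {r : ℝ} (h0 : 0 ≤ r) (h1 : r ≤ π/2) :
    f0 (m*π + r) = m*(π/2) + r := by
  induction m with
  | zero => simpa using f0_base h0 h1
  | succ n ih =>
    have : ((n:ℝ)+1)*π + r = (n*π + r) + π := by ring
    push_cast
    rw [this, f0_add_pi, ih]
    ring

lemma f0_lt {A s : ℝ} (hA : 0 ≤ A) (hs : A + (π/2)*(⌊2*A/π⌋:ℝ) < s) : A < f0 s := by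
  have hπ : (0:ℝ) < π := Real.pi_pos
  set n : ℤ := ⌊2*A/π⌋ with hn
  have hn0 : 0 ≤ n := Int.floor_nonneg.2 (by positivity)
  obtain ⟨m, hm⟩ := Int.eq_ofNat_of_zero_le hn0
  have hfl : (n:ℝ) ≤ 2*A/π := Int.floor_le _
  have hfu : 2*A/π < (n:ℝ) + 1 := Int.lt_floor_add_one _
  have hAl : (m:ℝ)*(π/2) ≤ A := by
    rw [hm] at hfl; push_cast at hfl
    rw [le_div_iff₀ hπ] at hfl; linarith
  have hAu : A < ((m:ℝ)+1)*(π/2) := by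
    rw [hm] at hfu; push_cast at hfu
    rw [div_lt_iff₀ hπ] at hfu; linarith
  have hmn : (n:ℝ) = (m:ℝ) := by rw [hm]; push_cast; ring
  rw [hmn] at hs
  by_cases hcase : (m:ℝ)*π + π/2 ≤ s
  · calc A < ((m:ℝ)+1)*(π/2) := hAu
      _ = f0 ((m:ℝ)*π + π/2) := by rw [f0_nat m (by positivity) le_rfl]; ring
      _ ≤ f0 s := f0_mono hcase
  · push_neg at hcase
    have hr0 : 0 ≤ s - (m:ℝ)*π := by nlinarith
    have hr1 : s - (m:ℝ)*π ≤ π/2 := by linarith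
    have : f0 s = (m:ℝ)*(π/2) + (s - (m:ℝ)*π) := by
      have h := f0_nat m hr0 hr1
      rw [show (m:ℝ)*π + (s - (m:ℝ)*π) = s by ring] at h
      exact h
    rw [this]
    nlinarith

noncomputable def gsig (σ t : ℝ) : ℝ := max 0 (min 1 (Real.sin (2*t)/σ))

lemma gsig_cont (σ : ℝ) : Continuous (gsig σ) :=
  continuous_const.max (continuous_const.min
    ((Real.continuous_sin.comp (continuous_const.mul continuous_id)).div_const σ))

lemma gsig_nonneg (σ t : ℝ) : 0 ≤ gsig σ t := le_max_left _ _

lemma gsig_le_one (σ t : ℝ) : gsig σ t ≤ 1 := max_le (by norm_num) (min_le_left _ _)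

lemma gsig_mul_sin {σ : ℝ} (hσ : 0 < σ) (u : ℝ) : 0 ≤ gsig σ u * Real.sin (2*u) := by
  rcases le_or_gt 0 (Real.sin (2*u)) with h | h
  · exact mul_nonneg (gsig_nonneg σ u) h
  · have hd : Real.sin (2*u)/σ ≤ 0 := div_nonpos_of_nonpos_of_nonneg h.le hσ.le
    have : gsig σ u = 0 := by
      unfold gsig
      rw [min_eq_right (by linarith), max_eq_left hd]
    rw [this, zero_mul]

lemma gsig_tendsto {s : ℝ} (hs : 0 < s) :
    Tendsto (fun n : ℕ => ∫ t in (0:ℝ)..s, gsig (1/((n:ℝ)+1)) t) atTop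
      (𝓝 (∫ t in (0:ℝ)..s, pind t)) := by
  have heq : ∀ n : ℕ, (∫ t in (0:ℝ)..s, gsig (1/((n:ℝ)+1)) t)
      = ∫ t in Ioc (0:ℝ) s, gsig (1/((n:ℝ)+1)) t := fun n =>
    intervalIntegral.integral_of_le hs.le
  have heq2 : (∫ t in (0:ℝ)..s, pind t) = ∫ t in Ioc (0:ℝ) s, pind t :=
    intervalIntegral.integral_of_le hs.le
  simp_rw [heq, heq2]
  apply MeasureTheory.tendsto_integral_of_dominated_convergence (bound := fun _ => (1:ℝ))
  · intro n; exact (gsig_cont _).aestronglyMeasurable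
  · exact integrableOn_const measure_Ioc_lt_top.ne
  · intro n
    filter_upwards with t
    rw [Real.norm_eq_abs, abs_of_nonneg (gsig_nonneg _ t)]
    exact gsig_le_one _ t
  · have hnull : (volume : Measure ℝ) {t : ℝ | Real.sin (2*t) = 0} = 0 := by
      have hsub : {t : ℝ | Real.sin (2*t) = 0} ⊆ Set.range (fun m : ℤ => (m:ℝ)*π/2) := by
        intro t ht
        simp only [Set.mem_setOf_eq] at ht
        obtain ⟨m, hm⟩ := Real.sin_eq_zero_iff.1 ht
        exact ⟨m, by linarith⟩
      exact measure_mono_null hsub ((Set.countable_range _).measure_zero _)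
    have hae : ∀ᵐ t : ℝ, ¬ (Real.sin (2*t) = 0) := by
      rw [ae_iff]; simpa using hnull
    filter_upwards [ae_restrict_of_ae hae] with t ht
    rcases lt_or_gt_of_ne ht with hneg | hpos
    · have hval : ∀ n : ℕ, gsig (1/((n:ℝ)+1)) t = pind t := by
        intro n
        have h1 : Real.sin (2*t)/(1/((n:ℝ)+1)) ≤ 0 :=
          div_nonpos_of_nonpos_of_nonneg hneg.le (by positivity)
        unfold gsig pind
        rw [min_eq_right (by linarith), max_eq_left h1, if_neg (by push_neg; linarith)]
      simp_rw [hval]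
      exact tendsto_const_nhds
    · have hpind : pind t = 1 := by unfold pind; rw [if_pos hpos]
      rw [hpind]
      obtain ⟨N, hN⟩ := exists_nat_ge (1 / Real.sin (2*t))
      apply Tendsto.congr' _ (tendsto_const_nhds (x := (1:ℝ)))
      rw [EventuallyEq, eventually_atTop]
      refine ⟨N, fun n hn => ?_⟩
      have h1 : 1 ≤ Real.sin (2*t)/(1/((n:ℝ)+1)) := by
        rw [div_div_eq_mul_div, div_one]
        have hNn : (N:ℝ) ≤ (n:ℝ) := Nat.cast_le.2 hn
        rw [div_le_iff₀ hpos] at hN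
        nlinarith
      unfold gsig
      rw [min_eq_left h1, max_eq_right (by norm_num)]


lemma core (k γ : ℝ) (hk : 0 < k) (V φ : ℝ → ℝ) (hV : Integrable V)
    (hφ : ∀ y, HasDerivAt φ (γ * V y + k * Real.sin (2 * φ y)) y)
    (hφlim : Tendsto φ atTop (nhds 0)) (x : ℝ)
    (g : ℝ → ℝ) (hgc : Continuous g) (hg1 : ∀ t, 0 ≤ g t) (hg2 : ∀ t, g t ≤ 1)
    (hg3 : ∀ u, 0 ≤ g u * Real.sin (2*u)) :
    (∫ t in (0:ℝ)..(φ x), g t) ≤ |γ| * ∫ t in Ioi x, |V t| := by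
  set A := |γ| * ∫ t in Ioi x, |V t| with hA
  have hφcont : Continuous φ := by
    rw [continuous_iff_continuousAt]; exact fun y => (hφ y).continuousAt
  set G : ℝ → ℝ := fun y => ∫ t in (0:ℝ)..y, g t with hGdef
  have hG : ∀ y, HasDerivAt G (g y) y := fun y =>
    intervalIntegral.integral_hasDerivAt_right (hgc.intervalIntegrable _ _)
      (hgc.stronglyMeasurableAtFilter _ _) hgc.continuousAt
  have hGcont : Continuous G := by
    rw [continuous_iff_continuousAt]; exact fun y => (hG y).continuousAt
  have hstep : ∀ y, x ≤ y → G (φ x) - A ≤ G (φ y) := by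
    intro y hxy
    have hd : ∀ t ∈ uIcc x y,
        HasDerivAt (fun u => G (φ u)) (g (φ t) * (γ * V t + k * Real.sin (2 * φ t))) t :=
      fun t _ => (hG (φ t)).comp t (hφ t)
    have hIeq : (fun t => g (φ t) * (γ * V t + k * Real.sin (2 * φ t)))
        = fun t => (γ * V t) * g (φ t) + (k * Real.sin (2 * φ t)) * g (φ t) := by
      funext t; ring
    have hI1 : IntervalIntegrable (fun t => (γ * V t) * g (φ t)) volume x y :=
      ((hV.const_mul γ).intervalIntegrable).mul_continuousOn
        ((hgc.comp hφcont).continuousOn)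
    have hI2 : IntervalIntegrable (fun t => (k * Real.sin (2 * φ t)) * g (φ t)) volume x y := by
      apply Continuous.intervalIntegrable
      exact ((continuous_const.mul ((Real.continuous_sin.comp (continuous_const.mul hφcont)))).mul (hgc.comp hφcont))
    have hI : IntervalIntegrable (fun t => g (φ t) * (γ * V t + k * Real.sin (2 * φ t))) volume x y := by
      rw [hIeq]; exact hI1.add hI2
    have hftc : (∫ t in x..y, g (φ t) * (γ * V t + k * Real.sin (2 * φ t)))
        = G (φ y) - G (φ x) := intervalIntegral.integral_eq_sub_of_hasDerivAt hd hI
    have hIlow : IntervalIntegrable (fun t => -(|γ| * |V t|)) volume x y :=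
      by exact (((hV.abs.const_mul |γ|)).neg).intervalIntegrable (a := x) (b := y)
    have hmono : (∫ t in x..y, -(|γ| * |V t|))
        ≤ ∫ t in x..y, g (φ t) * (γ * V t + k * Real.sin (2 * φ t)) := by
      apply intervalIntegral.integral_mono_on hxy hIlow hI
      intro t _
      have ha : 0 ≤ g (φ t) * Real.sin (2 * φ t) := hg3 (φ t)
      have hgabs : |g (φ t)| ≤ 1 := by
        rw [abs_of_nonneg (hg1 _)]; exact hg2 _
      have h2 : |g (φ t) * (γ * V t)| ≤ |γ| * |V t| := by
        rw [abs_mul, abs_mul]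
        calc |g (φ t)| * (|γ| * |V t|) ≤ 1 * (|γ| * |V t|) :=
              mul_le_mul_of_nonneg_right hgabs (by positivity)
          _ = |γ| * |V t| := one_mul _
      have h1 : -(|γ| * |V t|) ≤ g (φ t) * (γ * V t) := by
        have := neg_abs_le (g (φ t) * (γ * V t))
        linarith
      have hexp : g (φ t) * (γ * V t + k * Real.sin (2 * φ t))
          = g (φ t) * (γ * V t) + k * (g (φ t) * Real.sin (2 * φ t)) := by ring
      rw [hexp]
      nlinarith [hk.le]
    have hneg : (∫ t in x..y, -(|γ| * |V t|)) = -(|γ| * ∫ t in x..y, |V t|) := by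
      rw [intervalIntegral.integral_neg, intervalIntegral.integral_const_mul]
    have hVle : |γ| * (∫ t in x..y, |V t|) ≤ A := by
      rw [hA]
      apply mul_le_mul_of_nonneg_left _ (abs_nonneg γ)
      rw [intervalIntegral.integral_of_le hxy]
      apply MeasureTheory.setIntegral_mono_set (hV.abs.integrableOn)
        (Filter.Eventually.of_forall fun t => abs_nonneg _)
        (HasSubset.Subset.eventuallyLE Ioc_subset_Ioi_self)
    have := hmono
    rw [hftc, hneg] at this
    linarith
  have htd : Tendsto (fun y => G (φ y)) atTop (nhds (G 0)) :=
    ((hGcont.tendsto 0).comp hφlim)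
  have hG0 : G 0 = 0 := intervalIntegral.integral_same
  have : G (φ x) - A ≤ G 0 :=
    ge_of_tendsto htd (eventually_atTop.2 ⟨x, fun y hy => hstep y hy⟩)
  rw [hG0] at this
  linarith

lemma key (k γ : ℝ) (hk : 0 < k) (V θ : ℝ → ℝ) (hV : Integrable V)
    (hθ : ∀ x, HasDerivAt θ (γ * V x + k * Real.cos (2 * θ x)) x)
    (hlim : Tendsto θ atTop (nhds (-(π / 4)))) (x : ℝ) :
    θ x + π / 4 ≤ |γ| * (∫ t in Ioi x, |V t|)
      + (π/2) * (⌊2 * (|γ| * ∫ t in Ioi x, |V t|)/π⌋ : ℝ) := by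
  set A := |γ| * ∫ t in Ioi x, |V t| with hA
  have hA0 : 0 ≤ A :=
    mul_nonneg (abs_nonneg γ) (integral_nonneg fun t => abs_nonneg _)
  have hπ := Real.pi_pos
  have hfl0 : (0:ℝ) ≤ (⌊2*A/π⌋ : ℤ) := by
    have h : (0:ℤ) ≤ ⌊2*A/π⌋ := Int.floor_nonneg.2 (by positivity)
    exact_mod_cast h
  by_contra hcon
  push_neg at hcon
  rw [show 2 * A / π = 2*A/π by ring] at hcon
  set s := θ x + π/4 with hs
  have hs0 : 0 < s := lt_of_le_of_lt (by nlinarith) hcon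
  set φ : ℝ → ℝ := fun y => θ y + π/4 with hφdef
  have hφ : ∀ y, HasDerivAt φ (γ * V y + k * Real.sin (2 * φ y)) y := by
    intro y
    have h := (hθ y).add_const (π/4)
    have hc : Real.cos (2 * θ y) = Real.sin (2 * (θ y + π/4)) := by
      rw [show 2*(θ y + π/4) = 2*θ y + π/2 by ring, Real.sin_add_pi_div_two]
    rw [hc] at h
    exact h
  have hφlim : Tendsto φ atTop (nhds 0) := by
    have h := hlim.add_const (π/4)
    simpa using h
  have hcore : ∀ n : ℕ, (∫ t in (0:ℝ)..s, gsig (1/((n:ℝ)+1)) t) ≤ A := by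
    intro n
    have hσ : (0:ℝ) < 1/((n:ℝ)+1) := by positivity
    have h := core k γ hk V φ hV hφ hφlim x (gsig (1/((n:ℝ)+1))) (gsig_cont _)
      (gsig_nonneg _) (gsig_le_one _) (gsig_mul_sin hσ)
    exact h
  have hf0 : A < ∫ t in (0:ℝ)..s, pind t := by
    have h := f0_lt hA0 hcon
    unfold f0 at h
    exact h
  have hev : ∀ᶠ (n : ℕ) in atTop, A < ∫ t in (0:ℝ)..s, gsig (1/((n:ℝ)+1)) t :=
    (gsig_tendsto hs0).eventually (lt_mem_nhds hf0)
  obtain ⟨n, hn⟩ := hev.exists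
  exact absurd (hcore n) (not_le.2 hn)

theorem stmt_17 (k γ : ℝ) (hk : 0 < k) (V θ : ℝ → ℝ)
    (hV : Integrable V)
    (hθ : ∀ x, HasDerivAt θ (γ * V x + k * Real.cos (2 * θ x)) x)
    (hlim : Tendsto θ atTop (nhds (-(π / 4)))) :
    ∀ x : ℝ, |θ x + π / 4| ≤
      (fun a : ℝ => a + (π / 2) * ⌊2 * a / π⌋) (|γ| * ∫ t in Ioi x, |V t|) := by
  intro x
  have h1 := key k γ hk V θ hV hθ hlim x
  have h2 : -(θ x + π/4) ≤ |γ| * (∫ t in Ioi x, |V t|)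
      + (π/2) * (⌊2 * (|γ| * ∫ t in Ioi x, |V t|)/π⌋ : ℝ) := by
    have hθ' : ∀ y, HasDerivAt (fun y => -θ y - π/2)
        ((-γ) * V y + k * Real.cos (2 * ((fun y => -θ y - π/2) y))) y := by
      intro y
      have h := ((hθ y).neg).sub_const (π/2)
      have hc : Real.cos (2 * ((fun y => -θ y - π/2) y)) = -Real.cos (2 * θ y) := by
        simp only
        rw [show 2*(-θ y - π/2) = -(2*θ y + π) by ring, Real.cos_neg, Real.cos_add_pi]
      rw [hc]
      refine h.congr_deriv ?_
      ring
    have hlim' : Tendsto (fun y => -θ y - π/2) atTop (nhds (-(π/4))) := by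
      have h := (hlim.neg).sub_const (π/2)
      have : -(-(π/4)) - π/2 = -(π/4) := by ring
      rwa [this] at h
    have h := key k (-γ) hk V (fun y => -θ y - π/2) hV hθ' hlim' x
    simp only [abs_neg] at h
    have : -θ x - π/2 + π/4 = -(θ x + π/4) := by ring
    rwa [this] at h
  simp only
  rw [abs_le]
  constructor
  · linarith
  · exact h1
end
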